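/- arXiv:1908.11455 — 7 statements merged into one kernel-verified Lean document; each statement's English description precedes it below -/
import Mathlib

section
/- Let w ∈ S_∞ and let a, b be positive integers with |a−b| = 1. If there exists a reduced word of w in which every occurrence of s_a comes before every occurrence of s_b, then in every reduced word of w, every occurrence of s_a comes before every occurrence of s_b. -/
open Equiv

/-- The simple transposition `sᵢ = (i, i+1)` in `S_∞` (realized as `Equiv.Perm ℕ`). -/
def EGs (i : ℕ) : Equiv.Perm ℕ := Equiv.swap i (i + 1)

/-- Coxeter length: the minimal length of a word in the simple transpositions for `w`. -/
noncomputable def coxLength (w : Equiv.Perm ℕ) : ℕ :=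
  sInf {k | ∃ l : List ℕ, (l.map EGs).prod = w ∧ l.length = k}

/-- `l` is a reduced word for `w`. -/
def IsReducedWord (w : Equiv.Perm ℕ) (l : List ℕ) : Prop :=
  (l.map EGs).prod = w ∧ l.length = coxLength w

/-- Top-to-bottom, right-to-left reading word of a filling of `μ`. -/
def readingWord (μ : YoungDiagram) (T : ℕ → ℕ → ℕ) : List ℕ :=
  (List.range (μ.colLen 0)).flatMap fun i =>
    ((List.range (μ.rowLen i)).reverse).map fun j => T i j

/-- Standard Young tableaux of shape `μ`, as entry functions: strictly increasing along
rows and columns, zero outside `μ`, and the labels on the cells are exactly `1,…,|μ|`. -/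
def SYTset (μ : YoungDiagram) : Set (ℕ → ℕ → ℕ) :=
  {T | (∀ i j1 j2, j1 < j2 → (i, j2) ∈ μ.cells → T i j1 < T i j2) ∧
       (∀ i1 i2 j, i1 < i2 → (i2, j) ∈ μ.cells → T i1 j < T i2 j) ∧
       (∀ i j, (i, j) ∉ μ.cells → T i j = 0) ∧
       μ.cells.image (fun c => T c.1 c.2) = Finset.Icc 1 μ.card}

/-- Edelman–Greene tableaux of type `(μ, w)`, as entry functions: strictly increasing
along rows and columns, zero outside `μ`, whose reading word is a reduced word of `w`. -/
def EGset (μ : YoungDiagram) (w : Equiv.Perm ℕ) : Set (ℕ → ℕ → ℕ) :=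
  {T | (∀ i j1 j2, j1 < j2 → (i, j2) ∈ μ.cells → T i j1 < T i j2) ∧
       (∀ i1 i2 j, i1 < i2 → (i2, j) ∈ μ.cells → T i1 j < T i2 j) ∧
       (∀ i j, (i, j) ∉ μ.cells → T i j = 0) ∧
       IsReducedWord w (readingWord μ T)}

/-- Standardization: the cell `(i,j)` receives the rank of its entry, where equal
entries are ordered left to right (by column). -/
def stdEntry (μ : YoungDiagram) (T : ℕ → ℕ → ℕ) (i j : ℕ) : ℕ :=
  if (i, j) ∈ μ.cells then
    (μ.cells.filter fun c =>
      T c.1 c.2 < T i j ∨ (T c.1 c.2 = T i j ∧ c.2 < j) ∨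
        (T c.1 c.2 = T i j ∧ c.2 = j ∧ c.1 ≤ i)).card
  else 0

/-- `k` is a descent of the standard tableau `U`: the cell labeled `k - 1` lies weakly
east of the cell labeled `k`. -/
def IsDescent (μ : YoungDiagram) (U : ℕ → ℕ → ℕ) (k : ℕ) : Prop :=
  ∃ c ∈ μ.cells, ∃ c' ∈ μ.cells, U c.1 c.2 = k ∧ U c'.1 c'.2 = k - 1 ∧ c.2 ≤ c'.2

open scoped Classical in
/-- The sweep map: a cell's entry is one plus the number of descents of `U` that are
at most its label in `U`. -/
noncomputable def sweepEntry (μ : YoungDiagram) (U : ℕ → ℕ → ℕ) (i j : ℕ) : ℕ :=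
  if (i, j) ∈ μ.cells then
    ((Finset.Icc 1 (U i j)).filter fun k => IsDescent μ U k).card + 1
  else 0

/-- `w` is totally commutative: it has a reduced word whose letters are pairwise
at distance at least `2`. -/
def TotallyCommutative (w : Equiv.Perm ℕ) : Prop :=
  ∃ l : List ℕ, IsReducedWord w l ∧ l.Pairwise fun a b => 2 ≤ Nat.dist a b

/-- In a word `l`, every occurrence of `a` comes before every occurrence of `b`. -/
def AllBefore (l : List ℕ) (a b : ℕ) : Prop :=
  ∀ p q : Fin l.length, l.get p = a → l.get q = b → (p : ℕ) < (q : ℕ)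

namespace Stmt1Aux


def Inv (w : Equiv.Perm ℕ) : Set (ℕ × ℕ) := {p | p.1 < p.2 ∧ w p.2 < w p.1}

noncomputable def inv (w : Equiv.Perm ℕ) : ℕ := (Inv w).ncard

lemma EGs_mul_self (i : ℕ) : EGs i * EGs i = 1 := by
  simp [EGs, Equiv.swap_mul_self]

lemma EGs_apply (i x : ℕ) :
    EGs i x = if x = i then i + 1 else if x = i + 1 then i else x := by
  simp [EGs, Equiv.swap_apply_def]

lemma Inv_one : Inv (1 : Equiv.Perm ℕ) = ∅ := by
  ext ⟨x, y⟩; simp [Inv]; omega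

def φ (i : ℕ) : ℕ × ℕ ≃ ℕ × ℕ := Equiv.prodCongr (EGs i) (EGs i)

lemma φ_symm_apply (i : ℕ) (p : ℕ × ℕ) : (φ i).symm p = (EGs i p.1, EGs i p.2) := by
  simp [φ, EGs, Prod.map]

lemma Inv_mul_EGs (w : Equiv.Perm ℕ) (i : ℕ) (h : w i < w (i + 1)) :
    Inv (w * EGs i) = (φ i) '' (Inv w) ∪ {(i, i + 1)} := by
  ext ⟨x, y⟩
  rw [Set.mem_union, Set.mem_image_equiv]
  simp only [Inv, Set.mem_setOf_eq, φ_symm_apply, Set.mem_singleton_iff, Prod.mk.injEq,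
    Equiv.Perm.mul_apply, EGs_apply]
  split_ifs <;> omega


lemma inv_mul_EGs_of_lt (w : Equiv.Perm ℕ) (i : ℕ) (h : w i < w (i + 1))
    (hfin : (Inv w).Finite) :
    (Inv (w * EGs i)).Finite ∧ inv (w * EGs i) = inv w + 1 := by
  have heq := Inv_mul_EGs w i h
  have hfin1 : ((φ i) '' (Inv w)).Finite := hfin.image _
  have hfin2 : (Inv (w * EGs i)).Finite := by
    rw [heq]; exact hfin1.union (Set.finite_singleton _)
  refine ⟨hfin2, ?_⟩
  have hdisj : Disjoint ((φ i) '' (Inv w)) {((i : ℕ), i + 1)} := by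
    rw [Set.disjoint_singleton_right]
    rintro ⟨p, hp, hp2⟩
    have hpp : p = (φ i).symm (i, i+1) := by rw [← hp2]; simp
    rw [φ_symm_apply] at hpp
    simp [EGs_apply] at hpp
    rw [hpp] at hp
    have h1 := hp.1
    omega
  rw [inv, heq, Set.ncard_union_eq hdisj hfin1 (Set.finite_singleton _),
    Set.ncard_image_of_injective _ (φ i).injective, Set.ncard_singleton]
  rfl

lemma inv_mul_EGs_of_gt (w : Equiv.Perm ℕ) (i : ℕ) (h : w (i + 1) < w i)
    (hfin : (Inv w).Finite) :
    (Inv (w * EGs i)).Finite ∧ inv (w * EGs i) + 1 = inv w := by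
  set v := w * EGs i with hv
  have hw : v * EGs i = w := by
    rw [hv, mul_assoc, EGs_mul_self, mul_one]
  have hvi : v i < v (i + 1) := by
    show w (EGs i i) < w (EGs i (i+1))
    simp only [EGs_apply]
    simpa using h
  -- finiteness of Inv v from Inv w = φ '' Inv v ∪ {(i,i+1)}
  have heq := Inv_mul_EGs v i hvi
  rw [hw] at heq
  have hfin1 : ((φ i) '' (Inv v)).Finite := by
    apply Set.Finite.subset hfin
    rw [heq]; exact Set.subset_union_left
  have hfinv : (Inv v).Finite := by
    have : Inv v = (φ i).symm '' ((φ i) '' (Inv v)) := by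
      rw [Equiv.symm_image_image]
    rw [this]; exact hfin1.image _
  obtain ⟨_, hcard⟩ := inv_mul_EGs_of_lt v i hvi hfinv
  rw [hw] at hcard
  exact ⟨hfinv, by omega⟩

/-- word product -/
def wp (l : List ℕ) : Equiv.Perm ℕ := (l.map EGs).prod

lemma wp_nil : wp [] = 1 := rfl

lemma wp_concat (l : List ℕ) (i : ℕ) : wp (l ++ [i]) = wp l * EGs i := by
  simp [wp]

lemma ne_of_apply (w : Equiv.Perm ℕ) (i : ℕ) : w i ≠ w (i + 1) :=
  fun h => by have := w.injective h; omega

lemma wp_fin_and_le (l : List ℕ) : (Inv (wp l)).Finite ∧ inv (wp l) ≤ l.length := by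
  induction l using List.reverseRecOn with
  | nil => simp [wp_nil, Inv_one, inv]
  | append_singleton l i ih =>
    obtain ⟨hfin, hle⟩ := ih
    rw [wp_concat]
    rcases Nat.lt_or_ge (wp l i) (wp l (i+1)) with h | h
    · obtain ⟨h1, h2⟩ := inv_mul_EGs_of_lt (wp l) i h hfin
      exact ⟨h1, by simp; omega⟩
    · have h' : wp l (i+1) < wp l i := lt_of_le_of_ne h (Ne.symm (ne_of_apply _ i))
      obtain ⟨h1, h2⟩ := inv_mul_EGs_of_gt (wp l) i h' hfin
      exact ⟨h1, by simp; omega⟩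

lemma eq_one_of_no_descent (w : Equiv.Perm ℕ) (h : ∀ i, w i < w (i + 1)) : w = 1 := by
  have hmono : StrictMono w := strictMono_nat_of_lt_succ h
  ext x
  induction x using Nat.strong_induction_on with
  | _ x ih =>
    have hy : w (w.symm x) = x := w.apply_symm_apply x
    have h1 : w.symm x ≤ x := by
      have := hmono.le_apply (x := w.symm x)
      omega
    rcases Nat.lt_or_ge (w.symm x) x with h2 | h2
    · have := ih _ h2
      simp only [Equiv.Perm.one_apply] at this ⊢
      omega
    · have : w.symm x = x := by omega
      simp only [Equiv.Perm.one_apply]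
      rw [← this, hy]
      omega

lemma exists_descent (w : Equiv.Perm ℕ) (hw : w ≠ 1) : ∃ i, w (i + 1) < w i := by
  by_contra hc
  push_neg at hc
  exact hw (eq_one_of_no_descent w fun i =>
    lt_of_le_of_ne (hc i) (ne_of_apply w i))

lemma exists_word (w : Equiv.Perm ℕ) (hfin : (Inv w).Finite) :
    ∃ l : List ℕ, wp l = w ∧ l.length = inv w := by
  generalize hn : inv w = n
  induction n generalizing w with
  | zero =>
    refine ⟨[], ?_, rfl⟩
    by_contra hne
    have hne' : w ≠ 1 := fun h => hne (by rw [h]; rfl)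
    obtain ⟨i, hi⟩ := exists_descent w hne'
    obtain ⟨_, hc⟩ := inv_mul_EGs_of_gt w i hi hfin
    omega
  | succ n ih =>
    have hne : w ≠ 1 := by
      intro h; rw [h] at hn; simp [inv, Inv_one] at hn
    obtain ⟨i, hi⟩ := exists_descent w hne
    obtain ⟨hfin', hc⟩ := inv_mul_EGs_of_gt w i hi hfin
    obtain ⟨l, hl1, hl2⟩ := ih (w * EGs i) hfin' (by omega)
    refine ⟨l ++ [i], ?_, ?_⟩
    · rw [wp_concat, hl1, mul_assoc, EGs_mul_self, mul_one]
    · simp [hl2, hn]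


lemma coxLength_eq_inv (w : Equiv.Perm ℕ) (l : List ℕ) (hl : wp l = w) :
    coxLength w = inv w := by
  unfold coxLength
  have hfin : (Inv w).Finite := hl ▸ (wp_fin_and_le l).1
  obtain ⟨r, hr1, hr2⟩ := exists_word w hfin
  have hne : {k | ∃ m : List ℕ, (m.map EGs).prod = w ∧ m.length = k}.Nonempty :=
    ⟨inv w, r, hr1, hr2⟩
  apply le_antisymm
  · exact Nat.sInf_le ⟨r, hr1, hr2⟩
  · obtain ⟨m, hm1, hm2⟩ := Nat.sInf_mem hne
    have := (wp_fin_and_le m).2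
    rw [show wp m = w from hm1] at this
    omega

lemma isRed_iff (w : Equiv.Perm ℕ) (l : List ℕ) (hl : wp l = w) :
    IsReducedWord w l ↔ l.length = inv w := by
  rw [IsReducedWord, coxLength_eq_inv w l hl]
  exact and_iff_right hl

lemma red_length_inv (w : Equiv.Perm ℕ) (l : List ℕ) (h : IsReducedWord w l) :
    l.length = inv w := (isRed_iff w l h.1).1 h

lemma red_fin (w : Equiv.Perm ℕ) (l : List ℕ) (h : IsReducedWord w l) :
    (Inv w).Finite := h.1 ▸ (wp_fin_and_le l).1

/-- stripping the last letter of a reduced word -/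
lemma red_concat (w : Equiv.Perm ℕ) (u : List ℕ) (i : ℕ)
    (h : IsReducedWord w (u ++ [i])) :
    IsReducedWord (w * EGs i) u ∧ w (i + 1) < w i := by
  have hwp : wp (u ++ [i]) = w := h.1
  rw [wp_concat] at hwp
  have hu : wp u = w * EGs i := by
    rw [← hwp, mul_assoc, EGs_mul_self, mul_one]
  have hlen : u.length + 1 = inv w := by
    have := red_length_inv w _ h
    simpa using this
  have hfinw : (Inv w).Finite := red_fin w _ h
  have hfinu : (Inv (w * EGs i)).Finite := hu ▸ (wp_fin_and_le u).1
  have hdesc : w (i + 1) < w i := by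
    rcases Nat.lt_or_ge (w i) (w (i+1)) with hlt | hge
    · exfalso
      obtain ⟨_, hc⟩ := inv_mul_EGs_of_lt w i hlt hfinw
      have hle := (wp_fin_and_le u).2
      rw [hu] at hle
      omega
    · exact lt_of_le_of_ne hge (Ne.symm (ne_of_apply w i))
  obtain ⟨_, hc⟩ := inv_mul_EGs_of_gt w i hdesc hfinw
  exact ⟨(isRed_iff _ u hu).2 (by omega), hdesc⟩

/-- extending a reduced word along a descent -/
lemma red_extend (w : Equiv.Perm ℕ) (u : List ℕ) (i : ℕ)
    (hdesc : w (i + 1) < w i) (hu : IsReducedWord (w * EGs i) u) :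
    IsReducedWord w (u ++ [i]) := by
  have hwp : wp (u ++ [i]) = w := by
    rw [wp_concat, show wp u = w * EGs i from hu.1, mul_assoc, EGs_mul_self, mul_one]
  have hfinv : (Inv (w * EGs i)).Finite := red_fin _ _ hu
  have hfinw : (Inv w).Finite := by
    have : wp (u ++ [i]) = w := hwp
    exact this ▸ (wp_fin_and_le (u ++ [i])).1
  obtain ⟨_, hc⟩ := inv_mul_EGs_of_gt w i hdesc hfinw
  rw [isRed_iff w _ hwp]
  have := red_length_inv _ _ hu
  simp
  omega

lemma exists_red (v : Equiv.Perm ℕ) (hfin : (Inv v).Finite) :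
    ∃ r, IsReducedWord v r := by
  obtain ⟨r, hr1, hr2⟩ := exists_word v hfin
  exact ⟨r, (isRed_iff v r hr1).2 hr2⟩


set_option maxHeartbeats 1000000 in
lemma EGs_comm (i j : ℕ) (h : 2 ≤ Nat.dist i j) : EGs i * EGs j = EGs j * EGs i := by
  ext x
  simp only [Equiv.Perm.mul_apply, EGs_apply]
  rw [Nat.dist] at h
  split_ifs <;> omega

set_option maxHeartbeats 1000000 in
lemma EGs_braid (i : ℕ) : EGs i * EGs (i+1) * EGs i = EGs (i+1) * EGs i * EGs (i+1) := by
  ext x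
  simp only [Equiv.Perm.mul_apply, EGs_apply]
  split_ifs <;> omega

lemma desc_comm (w : Equiv.Perm ℕ) (i j : ℕ) (h : 2 ≤ Nat.dist i j)
    (hj : w (j + 1) < w j) : (w * EGs i) (j + 1) < (w * EGs i) j := by
  rw [Nat.dist] at h
  have h1 : EGs i j = j := by rw [EGs_apply]; split_ifs <;> omega
  have h2 : EGs i (j+1) = j+1 := by rw [EGs_apply]; split_ifs <;> omega
  show w (EGs i (j+1)) < w (EGs i j)
  rw [h1, h2]; exact hj

lemma desc_braid1 (w : Equiv.Perm ℕ) (i : ℕ) (hi : w (i + 1) < w i)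
    (hi1 : w (i + 2) < w (i + 1)) :
    (w * EGs i) (i + 2) < (w * EGs i) (i + 1) ∧
    (w * EGs i * EGs (i+1)) (i + 1) < (w * EGs i * EGs (i+1)) i := by
  constructor
  · show w (EGs i (i+2)) < w (EGs i (i+1))
    simp only [EGs_apply, show ∀ k:ℕ, k+1+1 = k+2 from fun k => rfl]
    split_ifs <;> omega
  · show w (EGs i (EGs (i+1) (i+1))) < w (EGs i (EGs (i+1) i))
    simp only [EGs_apply, show ∀ k:ℕ, k+1+1 = k+2 from fun k => rfl]
    split_ifs <;> omega

lemma desc_braid2 (w : Equiv.Perm ℕ) (i : ℕ) (hi : w (i + 1) < w i)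
    (hi1 : w (i + 2) < w (i + 1)) :
    (w * EGs (i+1)) (i + 1) < (w * EGs (i+1)) i ∧
    (w * EGs (i+1) * EGs i) (i + 2) < (w * EGs (i+1) * EGs i) (i + 1) := by
  constructor
  · show w (EGs (i+1) (i+1)) < w (EGs (i+1) i)
    simp only [EGs_apply, show ∀ k:ℕ, k+1+1 = k+2 from fun k => rfl]
    split_ifs <;> omega
  · show w (EGs (i+1) (EGs i (i+2))) < w (EGs (i+1) (EGs i (i+1)))
    simp only [EGs_apply, show ∀ k:ℕ, k+1+1 = k+2 from fun k => rfl]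
    split_ifs <;> omega

/-- letters avoid m implies block-preserving -/
lemma wp_preserves (l : List ℕ) (m : ℕ) (h : m ∉ l) :
    ∀ x, x ≤ m → wp l x ≤ m := by
  induction l with
  | nil => intro x hx; simpa [wp_nil] using hx
  | cons i l ih =>
    intro x hx
    have hi : i ≠ m := fun he => h (he ▸ List.mem_cons_self (a := i) (l := l))
    have hl : m ∉ l := fun he => h (List.mem_cons_of_mem i he)
    have h1 : wp l x ≤ m := ih hl x hx
    show EGs i (wp l x) ≤ m
    rw [EGs_apply]
    split_ifs <;> omega

lemma block_gt (w : Equiv.Perm ℕ) (m : ℕ) (h : ∀ x, x ≤ m → w x ≤ m) :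
    ∀ x, m < x → m < w x := by
  intro x hx
  by_contra hc
  push_neg at hc
  have himg : (Finset.Iic m).image w = Finset.Iic m := by
    apply Finset.eq_of_subset_of_card_le
    · intro y hy
      simp only [Finset.mem_image, Finset.mem_Iic] at hy ⊢
      obtain ⟨z, hz, hzy⟩ := hy
      exact hzy ▸ h z hz
    · rw [Finset.card_image_of_injective _ w.injective]
  have : w x ∈ (Finset.Iic m).image w := by
    rw [himg]; simpa using hc
  simp only [Finset.mem_image, Finset.mem_Iic] at this
  obtain ⟨z, hz, hzx⟩ := this
  have := w.injective hzx
  omega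

/-- every reduced word of a block-preserving perm avoids m -/
lemma red_avoids (m : ℕ) : ∀ (l : List ℕ) (w : Equiv.Perm ℕ),
    IsReducedWord w l → (∀ x, x ≤ m → w x ≤ m) → m ∉ l := by
  intro l
  induction l using List.reverseRecOn with
  | nil => intro w _ _; simp
  | append_singleton u i ih =>
    intro w hred hblock
    obtain ⟨hu, hdesc⟩ := red_concat w u i hred
    have him : i ≠ m := by
      intro he
      have h1 : w i ≤ m := hblock i (le_of_eq he)
      have h2 : m < w (i + 1) := block_gt w m hblock (i + 1) (by omega)
      omega
    have hblock' : ∀ x, x ≤ m → (w * EGs i) x ≤ m := by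
      intro x hx
      show w (EGs i x) ≤ m
      refine hblock _ ?_
      rw [EGs_apply]
      split_ifs <;> omega
    have hmu := ih (w * EGs i) hu hblock'
    simp only [List.mem_append, List.mem_singleton]
    push_neg
    exact ⟨hmu, fun he => him he.symm⟩


lemma AB_iff (l : List ℕ) (a b : ℕ) : AllBefore l a b ↔
    ∀ (p q : ℕ) (_ : p < l.length) (_ : q < l.length), l[p] = a → l[q] = b → p < q := by
  constructor
  · intro h p q hp hq hpa hqb
    exact h ⟨p, hp⟩ ⟨q, hq⟩ (by simpa using hpa) (by simpa using hqb)
  · intro h p q hpa hqb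
    exact h p q p.2 q.2 (by simpa using hpa) (by simpa using hqb)

lemma AB_nil (a b : ℕ) : AllBefore [] a b :=
  fun p _ _ _ => absurd p.isLt (by simp)

lemma AB_concat {a b : ℕ} (hab : a ≠ b) (u : List ℕ) (i : ℕ) :
    AllBefore (u ++ [i]) a b ↔ AllBefore u a b ∧ (i = a → b ∉ u) := by
  rw [AB_iff, AB_iff]
  constructor
  · intro h
    refine ⟨fun p q hp hq hpa hqb => ?_, fun hia hbmem => ?_⟩
    · exact h p q (by simp; omega) (by simp; omega)
        (by rw [List.getElem_append_left hp]; exact hpa)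
        (by rw [List.getElem_append_left hq]; exact hqb)
    · obtain ⟨q, hq, hqb⟩ := List.mem_iff_getElem.1 hbmem
      have := h u.length q (by simp) (by simp; omega)
        (by rw [List.getElem_concat_length rfl]; exact hia)
        (by rw [List.getElem_append_left hq]; exact hqb)
      omega
  · rintro ⟨h1, h2⟩ p q hp hq hpa hqb
    simp only [List.length_append, List.length_singleton] at hp hq
    rcases Nat.lt_or_ge p u.length with hpu | hpu
    · rcases Nat.lt_or_ge q u.length with hqu | hqu
      · exact h1 p q hpu hqu (by rwa [List.getElem_append_left hpu] at hpa)
          (by rwa [List.getElem_append_left hqu] at hqb)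
      · omega
    · have hp' : p = u.length := by omega
      subst hp'
      rw [List.getElem_concat_length rfl] at hpa
      rcases Nat.lt_or_ge q u.length with hqu | hqu
      · rw [List.getElem_append_left hqu] at hqb
        exact absurd (hqb ▸ List.getElem_mem hqu) (h2 hpa)
      · have hq' : q = u.length := by omega
        subst hq'
        rw [List.getElem_concat_length rfl] at hqb
        omega


lemma dist_eq (x y : ℕ) : Nat.dist x y = (x - y) + (y - x) := rfl

lemma main (a b : ℕ) (hab : Nat.dist a b = 1) :
    ∀ n (w : Equiv.Perm ℕ) (l l' : List ℕ), l.length = n →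
      IsReducedWord w l → IsReducedWord w l' → AllBefore l a b → AllBefore l' a b := by
  intro n
  induction n using Nat.strong_induction_on with
  | _ n IH =>
  intro w l l' hlen hl hl' hAB
  have haneb : a ≠ b := by rw [dist_eq] at hab; omega
  have hlenl' : l'.length = n := by
    rw [red_length_inv w l' hl', ← red_length_inv w l hl, hlen]
  rcases Nat.eq_zero_or_pos n with h0 | hpos
  · subst h0
    rw [List.length_eq_zero_iff.1 hlenl']
    exact AB_nil a b
  obtain ⟨u, i, rfl⟩ : ∃ u i, l = u ++ [i] := by
    rcases List.eq_nil_or_concat l with h | ⟨u, i, h⟩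
    · subst h; simp at hlen; omega
    · exact ⟨u, i, by simpa using h⟩
  obtain ⟨u', j, rfl⟩ : ∃ u' j, l' = u' ++ [j] := by
    rcases List.eq_nil_or_concat l' with h | ⟨u', j, h⟩
    · subst h; simp at hlenl'; omega
    · exact ⟨u', j, by simpa using h⟩
  obtain ⟨hu, hdi⟩ := red_concat w u i hl
  obtain ⟨hu', hdj⟩ := red_concat w u' j hl'
  have hninv : n = inv w := hlen ▸ red_length_inv w _ hl
  -- same-last-letter step, using the induction hypothesis
  have sameLast : ∀ (x : ℕ) (m m' : List ℕ), IsReducedWord w (m ++ [x]) →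
      IsReducedWord w (m' ++ [x]) → AllBefore (m ++ [x]) a b →
      AllBefore (m' ++ [x]) a b := by
    intro x m m' hm hm' hABm
    obtain ⟨hmr, _⟩ := red_concat w m x hm
    obtain ⟨hm'r, _⟩ := red_concat w m' x hm'
    have hlm : m.length = n - 1 := by
      have h1 := red_length_inv w _ hm
      simp only [List.length_append, List.length_singleton] at h1
      omega
    have hlm' : m'.length = n - 1 := by
      have h1 := red_length_inv w _ hm'
      simp only [List.length_append, List.length_singleton] at h1
      omega
    rw [AB_concat haneb] at hABm ⊢
    refine ⟨IH (n-1) (by omega) (w * EGs x) m m' hlm hmr hm'r hABm.1, ?_⟩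
    intro hxa
    have hbm : b ∉ m := hABm.2 hxa
    have hblock : ∀ z, z ≤ b → (w * EGs x) z ≤ b := by
      have hwm := wp_preserves m b hbm
      rw [show wp m = w * EGs x from hmr.1] at hwm
      exact hwm
    exact red_avoids b m' (w * EGs x) hm'r hblock
  by_cases hij : i = j
  · subst hij
    exact sameLast i u u' hl hl' hAB
  rcases Nat.lt_or_ge (Nat.dist i j) 2 with hd1 | hd2
  · -- |i - j| = 1 : braid case
    have hd1' : j = i + 1 ∨ i = j + 1 := by rw [dist_eq] at hd1; omega
    rcases hd1' with hji | hji
    · -- j = i + 1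
      subst hji
      have hdj2 : w (i + 2) < w (i + 1) := hdj
      obtain ⟨hb1, hb2⟩ := desc_braid1 w i hdi hdj2
      obtain ⟨hb3, hb4⟩ := desc_braid2 w i hdi hdj2
      have hfinv : (Inv (w * EGs i * EGs (i+1) * EGs i)).Finite := by
        have hwp : wp ((u ++ [i+1]) ++ [i]) = w * EGs i * EGs (i+1) * EGs i := by
          rw [wp_concat, wp_concat, show wp u = w * EGs i from hu.1]
        rw [← hwp]
        exact (wp_fin_and_le _).1
      obtain ⟨r, hr⟩ := exists_red _ hfinv
      have hbr : w * EGs (i+1) * EGs i * EGs (i+1) = w * EGs i * EGs (i+1) * EGs i := by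
        simp only [mul_assoc]
        congr 1
        simp only [← mul_assoc]
        exact (EGs_braid i).symm
      have hr2 : IsReducedWord (w * EGs (i+1) * EGs i * EGs (i+1)) r := by
        rw [hbr]; exact hr
      have hm2 : IsReducedWord w (((r ++ [i]) ++ [i+1]) ++ [i]) :=
        red_extend w _ i hdi (red_extend (w * EGs i) _ (i+1) hb1
          (red_extend (w * EGs i * EGs (i+1)) r i hb2 hr))
      have hm1 : IsReducedWord w (((r ++ [i+1]) ++ [i]) ++ [i+1]) :=
        red_extend w _ (i+1) hdj (red_extend (w * EGs (i+1)) _ i hb3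
          (red_extend (w * EGs (i+1) * EGs i) r (i+1) hb4 hr2))
      by_cases hA : i = a ∧ i + 1 = b
      · -- support contradiction: b never occurs, yet l' ends with b
        have hbu : b ∉ u := ((AB_concat haneb u i).1 hAB).2 hA.1
        have hbl : b ∉ u ++ [i] := by
          simp only [List.mem_append, List.mem_singleton]
          push_neg
          exact ⟨hbu, by omega⟩
        have hblock : ∀ z, z ≤ b → w z ≤ b := by
          have h0 := wp_preserves (u ++ [i]) b hbl
          rw [show wp (u ++ [i]) = w from hl.1] at h0
          exact h0
        have hav := red_avoids b (u' ++ [i+1]) w hl' hblock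
        exact (hav (List.mem_append.2 (Or.inr (List.mem_singleton.2 hA.2.symm)))).elim
      by_cases hB : i = b ∧ i + 1 = a
      · -- m2 = r ++ [b, a, b] cannot satisfy AllBefore
        have hABm2 := sameLast i u ((r ++ [i]) ++ [i+1]) hl hm2 hAB
        rw [AB_concat haneb, AB_concat haneb, AB_concat haneb] at hABm2
        have h1 : b ∉ r ++ [i] := hABm2.1.2 hB.2
        exact (h1 (List.mem_append.2 (Or.inr (List.mem_singleton.2 hB.1.symm)))).elim
      · have hABm2 := sameLast i u ((r ++ [i]) ++ [i+1]) hl hm2 hAB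
        have hABm1 : AllBefore (((r ++ [i+1]) ++ [i]) ++ [i+1]) a b := by
          rw [AB_concat haneb, AB_concat haneb, AB_concat haneb] at hABm2 ⊢
          simp only [List.mem_append, List.mem_singleton] at hABm2 ⊢
          have f1 : i = a → b ≠ i := by omega
          have f2 : i = a → b ≠ i + 1 := by omega
          have f3 : i + 1 = a → b ≠ i + 1 := by omega
          have f4 : i + 1 = a → b ≠ i := by omega
          obtain ⟨⟨⟨hP, h1⟩, h2⟩, h3⟩ := hABm2
          refine ⟨⟨⟨hP, ?_⟩, ?_⟩, ?_⟩
          · intro h'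
            exact fun hbr => h2 h' (Or.inl hbr)
          · intro h'
            rintro (hbr | hb1)
            exacts [h3 h' (Or.inl (Or.inl hbr)), f2 h' hb1]
          · intro h'
            rintro ((hbr | hb1) | hb0)
            · exact h2 h' (Or.inl hbr)
            · exact f3 h' hb1
            · exact f4 h' hb0
        exact sameLast (i+1) ((r ++ [i+1]) ++ [i]) u' hm1 hl' hABm1
    · -- i = j + 1
      subst hji
      have hdi2 : w (j + 2) < w (j + 1) := hdi
      obtain ⟨hb1, hb2⟩ := desc_braid1 w j hdj hdi2
      obtain ⟨hb3, hb4⟩ := desc_braid2 w j hdj hdi2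
      have hfinv : (Inv (w * EGs j * EGs (j+1) * EGs j)).Finite := by
        have hwp : wp ((u' ++ [j+1]) ++ [j]) = w * EGs j * EGs (j+1) * EGs j := by
          rw [wp_concat, wp_concat, show wp u' = w * EGs j from hu'.1]
        rw [← hwp]
        exact (wp_fin_and_le _).1
      obtain ⟨r, hr⟩ := exists_red _ hfinv
      have hbr : w * EGs (j+1) * EGs j * EGs (j+1) = w * EGs j * EGs (j+1) * EGs j := by
        simp only [mul_assoc]
        congr 1
        simp only [← mul_assoc]
        exact (EGs_braid j).symm
      have hr2 : IsReducedWord (w * EGs (j+1) * EGs j * EGs (j+1)) r := by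
        rw [hbr]; exact hr
      have hm2 : IsReducedWord w (((r ++ [j]) ++ [j+1]) ++ [j]) :=
        red_extend w _ j hdj (red_extend (w * EGs j) _ (j+1) hb1
          (red_extend (w * EGs j * EGs (j+1)) r j hb2 hr))
      have hm1 : IsReducedWord w (((r ++ [j+1]) ++ [j]) ++ [j+1]) :=
        red_extend w _ (j+1) hdi (red_extend (w * EGs (j+1)) _ j hb3
          (red_extend (w * EGs (j+1) * EGs j) r (j+1) hb4 hr2))
      by_cases hB : j = b ∧ j + 1 = a
      · -- l ends with a, so b never occurs, yet l' ends with b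
        have hbu : b ∉ u := ((AB_concat haneb u (j+1)).1 hAB).2 hB.2
        have hbl : b ∉ u ++ [j+1] := by
          simp only [List.mem_append, List.mem_singleton]
          push_neg
          exact ⟨hbu, by omega⟩
        have hblock : ∀ z, z ≤ b → w z ≤ b := by
          have h0 := wp_preserves (u ++ [j+1]) b hbl
          rw [show wp (u ++ [j+1]) = w from hl.1] at h0
          exact h0
        have hav := red_avoids b (u' ++ [j]) w hl' hblock
        exact (hav (List.mem_append.2 (Or.inr (List.mem_singleton.2 hB.1.symm)))).elim
      by_cases hA : j = a ∧ j + 1 = b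
      · -- m1 = r ++ [b, a, b] cannot satisfy AllBefore
        have hABm1 := sameLast (j+1) u ((r ++ [j+1]) ++ [j]) hl hm1 hAB
        rw [AB_concat haneb, AB_concat haneb, AB_concat haneb] at hABm1
        have h1 : b ∉ r ++ [j+1] := hABm1.1.2 hA.1
        exact (h1 (List.mem_append.2 (Or.inr (List.mem_singleton.2 hA.2.symm)))).elim
      · have hABm1 := sameLast (j+1) u ((r ++ [j+1]) ++ [j]) hl hm1 hAB
        have hABm2 : AllBefore (((r ++ [j]) ++ [j+1]) ++ [j]) a b := by
          rw [AB_concat haneb, AB_concat haneb, AB_concat haneb] at hABm1 ⊢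
          simp only [List.mem_append, List.mem_singleton] at hABm1 ⊢
          have f1 : j = a → b ≠ j := by omega
          have f2 : j = a → b ≠ j + 1 := by omega
          have f3 : j + 1 = a → b ≠ j + 1 := by omega
          have f4 : j + 1 = a → b ≠ j := by omega
          obtain ⟨⟨⟨hP, h1⟩, h2⟩, h3⟩ := hABm1
          refine ⟨⟨⟨hP, ?_⟩, ?_⟩, ?_⟩
          · intro h'
            exact fun hbr => h2 h' (Or.inl hbr)
          · intro h'
            rintro (hbr | hb0)
            exacts [h3 h' (Or.inl (Or.inl hbr)), f4 h' hb0]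
          · intro h'
            rintro ((hbr | hb0) | hb1)
            · exact h2 h' (Or.inl hbr)
            · exact f1 h' hb0
            · exact f2 h' hb1
        exact sameLast j ((r ++ [j]) ++ [j+1]) u' hm2 hl' hABm2
  · -- |i - j| ≥ 2 : commutation case
    have hcomm := EGs_comm i j hd2
    have hdj' : (w * EGs i) (j+1) < (w * EGs i) j := desc_comm w i j hd2 hdj
    have hdi' : (w * EGs j) (i+1) < (w * EGs j) i :=
      desc_comm w j i (by rwa [Nat.dist_comm]) hdi
    have hfinv : (Inv (w * EGs i * EGs j)).Finite := by
      have hwp : wp (u ++ [j]) = w * EGs i * EGs j := by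
        rw [wp_concat, show wp u = w * EGs i from hu.1]
      rw [← hwp]
      exact (wp_fin_and_le _).1
    obtain ⟨r, hr⟩ := exists_red (w * EGs i * EGs j) hfinv
    have hr2 : IsReducedWord (w * EGs j * EGs i) r := by
      rwa [mul_assoc, ← hcomm, ← mul_assoc]
    have hm1 : IsReducedWord w ((r ++ [j]) ++ [i]) :=
      red_extend w _ i hdi (red_extend (w * EGs i) r j hdj' hr)
    have hm2 : IsReducedWord w ((r ++ [i]) ++ [j]) :=
      red_extend w _ j hdj (red_extend (w * EGs j) r i hdi' hr2)
    have hAB1 : AllBefore ((r ++ [j]) ++ [i]) a b := sameLast i u (r ++ [j]) hl hm1 hAB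
    have hAB2 : AllBefore ((r ++ [i]) ++ [j]) a b := by
      rw [AB_concat haneb, AB_concat haneb] at hAB1 ⊢
      have g4 : j = a → b ≠ i := by rw [dist_eq] at hab hd2; omega
      simp only [List.mem_append, List.mem_singleton] at hAB1 ⊢
      obtain ⟨⟨hPr, hja⟩, hia⟩ := hAB1
      exact ⟨⟨hPr, fun h' hbr => hia h' (Or.inl hbr)⟩,
             fun h' => by rintro (hbr | hbi); exacts [hja h' hbr, g4 h' hbi]⟩
    exact sameLast j (r ++ [i]) u' hm2 hl' hAB2


end Stmt1Aux


theorem stmt1 (w : Equiv.Perm ℕ) (a b : ℕ) (ha : 0 < a) (hb : 0 < b)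
    (hab : Nat.dist a b = 1) (l : List ℕ) (hl : IsReducedWord w l)
    (h : AllBefore l a b) :
    ∀ l' : List ℕ, IsReducedWord w l' → AllBefore l' a b := by
  intro l' hl'
  exact Stmt1Aux.main a b hab l.length w l l' rfl hl hl' h
end

section
/- The standardization map std, restricted to semistandard Young tableaux of shape λ with a fixed content μ, is injective into the set of standard Young tableaux of shape λ. -/
open Equiv

lemma std_bounds (μ : YoungDiagram) (S : ℕ → ℕ → ℕ) {i j : ℕ} (hij : (i, j) ∈ μ.cells) :
    (μ.cells.filter fun c => S c.1 c.2 < S i j).card < stdEntry μ S i j ∧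
    stdEntry μ S i j ≤ (μ.cells.filter fun c => S c.1 c.2 < S i j + 1).card := by
  rw [stdEntry, if_pos hij]
  constructor
  · apply Finset.card_lt_card
    rw [Finset.ssubset_iff_of_subset]
    · exact ⟨(i, j), Finset.mem_filter.mpr ⟨hij, Or.inr (Or.inr ⟨rfl, rfl, le_refl i⟩)⟩,
        by simp⟩
    · intro c hc
      rw [Finset.mem_filter] at hc ⊢
      exact ⟨hc.1, Or.inl hc.2⟩
  · apply Finset.card_le_card
    intro c hc
    rw [Finset.mem_filter] at hc ⊢
    refine ⟨hc.1, ?_⟩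
    rcases hc.2 with h | h | h <;> omega

/-- Standardization is injective on semistandard Young tableaux of shape `μ`
with a fixed content. -/
theorem stmt2 (μ : YoungDiagram) (T T' : SemistandardYoungTableau μ)
    (hcontent : ∀ v : ℕ, (μ.cells.filter fun c => T c.1 c.2 = v).card
      = (μ.cells.filter fun c => T' c.1 c.2 = v).card)
    (hstd : ∀ i j, stdEntry μ (fun i j => T i j) i j
      = stdEntry μ (fun i j => T' i j) i j) :
    T = T' := by
  -- cumulative counts agree
  have M_eq : ∀ v : ℕ, (μ.cells.filter fun c => T c.1 c.2 < v).card
      = (μ.cells.filter fun c => T' c.1 c.2 < v).card := by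
    intro v
    induction v with
    | zero => simp
    | succ v ih =>
      have h1 : ∀ (S : ℕ → ℕ → ℕ), (μ.cells.filter fun c => S c.1 c.2 < v + 1)
          = (μ.cells.filter fun c => S c.1 c.2 < v) ∪
            (μ.cells.filter fun c => S c.1 c.2 = v) := by
        intro S
        rw [← Finset.filter_or]
        apply Finset.filter_congr
        intro c _
        constructor <;> intro h <;> omega
      have hd : ∀ (S : ℕ → ℕ → ℕ), Disjoint (μ.cells.filter fun c => S c.1 c.2 < v)
          (μ.cells.filter fun c => S c.1 c.2 = v) := by
        intro S
        rw [Finset.disjoint_left]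
        intro c hc hc'
        rw [Finset.mem_filter] at hc hc'
        omega
      rw [h1, h1, Finset.card_union_of_disjoint (hd _),
        Finset.card_union_of_disjoint (hd _), ih, hcontent v]
  have M_mono : ∀ v w : ℕ, v ≤ w → (μ.cells.filter fun c => T c.1 c.2 < v).card
      ≤ (μ.cells.filter fun c => T c.1 c.2 < w).card := by
    intro v w hvw
    apply Finset.card_le_card
    intro c hc
    rw [Finset.mem_filter] at hc ⊢
    exact ⟨hc.1, lt_of_lt_of_le hc.2 hvw⟩
  ext i j
  by_cases hij : (i, j) ∈ μ.cells
  · have b1 := std_bounds μ (fun i j => T i j) hij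
    have b2 := std_bounds μ (fun i j => T' i j) hij
    rw [← hstd i j] at b2
    rw [← M_eq, ← M_eq] at b2
    by_contra hne
    rcases Nat.lt_or_ge (T i j) (T' i j) with h | h
    · have hle : T i j + 1 ≤ T' i j := h
      have := lt_of_lt_of_le b2.1 (le_trans b1.2 (M_mono (T i j + 1) (T' i j) hle))
      exact lt_irrefl _ this
    · have h' : T' i j + 1 ≤ T i j := lt_of_le_of_ne h (Ne.symm hne)
      have := lt_of_lt_of_le b1.1 (le_trans b2.2 (M_mono (T' i j + 1) (T i j) h'))
      exact lt_irrefl _ this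
  · rw [T.zeros, T'.zeros] <;> rwa [← YoungDiagram.mem_cells]
end

section
/- For any standard Young tableau U of shape λ, the tableau sweep(U), whose entry in cell (x,y) is one plus the number of descents of U that are at most the label of (x,y) in U, is a semistandard Young tableau of shape λ (weakly increasing along rows and strictly increasing along columns). -/
open Equiv

/-- For a standard Young tableau `U` of shape `μ`, `sweep U` is weakly increasing
along rows and strictly increasing along columns, i.e. it is semistandard. -/
theorem stmt3 (μ : YoungDiagram) (U : ℕ → ℕ → ℕ) (hU : U ∈ SYTset μ) :
    (∀ i j1 j2, j1 < j2 → (i, j2) ∈ μ.cells →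
      sweepEntry μ U i j1 ≤ sweepEntry μ U i j2) ∧
    (∀ i1 i2 j, i1 < i2 → (i2, j) ∈ μ.cells →
      sweepEntry μ U i1 j < sweepEntry μ U i2 j) := by

  classical
  obtain ⟨hrow, hcol, hzero, himg⟩ := hU
  have hmem : ∀ i j, (i, j) ∈ μ.cells → U i j ∈ Finset.Icc 1 μ.card := by
    intro i j h
    rw [← himg]
    exact Finset.mem_image.2 ⟨(i, j), h, rfl⟩
  have hex : ∀ k, k ∈ Finset.Icc 1 μ.card → ∃ c, c ∈ μ.cells ∧ U c.1 c.2 = k := by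
    intro k hk
    rw [← himg] at hk
    obtain ⟨c, hc, hck⟩ := Finset.mem_image.1 hk
    exact ⟨c, hc, hck⟩
  constructor
  · intro i j1 j2 hj h2
    have h1 : (i, j1) ∈ μ.cells := (YoungDiagram.mem_cells _).mpr (μ.up_left_mem le_rfl hj.le ((YoungDiagram.mem_cells _).mp h2))
    have hab : U i j1 < U i j2 := hrow i j1 j2 hj h2
    simp only [sweepEntry, if_pos h1, if_pos h2]
    have hsub : Finset.Icc 1 (U i j1) ⊆ Finset.Icc 1 (U i j2) :=
      Finset.Icc_subset_Icc_right hab.le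
    exact Nat.add_le_add_right (Finset.card_le_card (Finset.filter_subset_filter _ hsub)) 1
  · intro i1 i2 j hi h2
    have h1 : (i1, j) ∈ μ.cells := (YoungDiagram.mem_cells _).mpr (μ.up_left_mem hi.le le_rfl ((YoungDiagram.mem_cells _).mp h2))
    have hab : U i1 j < U i2 j := hcol i1 i2 j hi h2
    have ha1 : 1 ≤ U i1 j := (Finset.mem_Icc.1 (hmem _ _ h1)).1
    have hbcard : U i2 j ≤ μ.card := (Finset.mem_Icc.1 (hmem _ _ h2)).2
    set a := U i1 j with ha
    set b := U i2 j with hb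
    have key : ∃ k, a < k ∧ k ≤ b ∧ IsDescent μ U k := by
      by_contra hno
      push_neg at hno
      have hch : ∀ k, a ≤ k → k ≤ b → ∃ c, c ∈ μ.cells ∧ U c.1 c.2 = k := fun k hk1 hk2 =>
        hex k (Finset.mem_Icc.2 ⟨le_trans ha1 hk1, le_trans hk2 hbcard⟩)
      let f : ℕ → ℕ × ℕ := fun k =>
        if k = a then (i1, j) else if k = b then (i2, j)
        else if h : a ≤ k ∧ k ≤ b then Classical.choose (hch k h.1 h.2) else (0, 0)
      have hf : ∀ k, a ≤ k → k ≤ b → f k ∈ μ.cells ∧ U (f k).1 (f k).2 = k := by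
        intro k hk1 hk2
        by_cases hka : k = a
        · subst hka
          simpa [f] using And.intro h1 ha.symm
        · by_cases hkb : k = b
          · subst hkb
            simpa [f, hka] using And.intro h2 hb.symm
          · have hsp := Classical.choose_spec (hch k hk1 hk2)
            simp only [f, if_neg hka, if_neg hkb, dif_pos (And.intro hk1 hk2)]
            exact hsp
      have main : ∀ d, a + d ≤ b → j + d ≤ (f (a + d)).2 := by
        intro d
        induction d with
        | zero =>
          intro _
          simp [f]
        | succ d ih =>
          intro hd
          show j + d + 1 ≤ (f (a + d + 1)).2
          have hd' : a + d ≤ b := by omega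
          have ih' := ih hd'
          have hk := hf (a + d + 1) (by omega) hd
          have hk' := hf (a + d) (by omega) hd'
          have hnd := hno (a + d + 1) (by omega) hd
          have hlt : ¬ (f (a + d + 1)).2 ≤ (f (a + d)).2 := by
            intro hle
            exact hnd ⟨f (a + d + 1), hk.1, f (a + d), hk'.1, hk.2, by
              rw [hk'.2]; omega, hle⟩
          omega
      have hm := main (b - a) (by omega)
      have hfb : a + (b - a) = b := by omega
      rw [hfb] at hm
      have hfbv : (f b).2 = j := by
        have hba : b ≠ a := by omega
        simp [f, hba]
      omega
    obtain ⟨k, hk1, hk2, hkd⟩ := key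
    simp only [sweepEntry, if_pos h1, if_pos h2]
    have hsub : (Finset.Icc 1 a).filter (fun k => IsDescent μ U k) ⊂
        (Finset.Icc 1 b).filter (fun k => IsDescent μ U k) := by
      refine ⟨Finset.filter_subset_filter _ (Finset.Icc_subset_Icc_right hab.le), ?_⟩
      intro hsup
      have hkin : k ∈ (Finset.Icc 1 a).filter (fun k => IsDescent μ U k) :=
        hsup (Finset.mem_filter.2 ⟨Finset.mem_Icc.2 ⟨by omega, hk2⟩, hkd⟩)
      have := (Finset.mem_Icc.1 (Finset.mem_filter.1 hkin).1).2
      omega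
    exact Nat.add_lt_add_right (Finset.card_lt_card hsub) 1
end

section
/- Let U be an Edelman–Greene tableau of type (λ, w). If two cells (x,y) and (c,d) lie in the same sweep of std(U) (i.e. they receive the same label in sweep(std(U))) and y < d, then the label of (x,y) in U is at most the label of (c,d) in U. -/
open Equiv

/-- Lexicographic key (entry, column, row). -/
def fkey (T : ℕ → ℕ → ℕ) (a : ℕ × ℕ) : ℕ ×ₗ (ℕ ×ₗ ℕ) :=
  toLex (T a.1 a.2, toLex (a.2, a.1))

lemma fkey_inj {T : ℕ → ℕ → ℕ} {a b : ℕ × ℕ} (h : fkey T a = fkey T b) : a = b := by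
  have h1 := toLex.injective h
  have h2 := toLex.injective (congrArg Prod.snd h1)
  have hc2 : a.2 = b.2 := congrArg Prod.fst h2
  have hc1 : a.1 = b.1 := congrArg Prod.snd h2
  exact Prod.ext hc1 hc2

lemma fkey_le_iff {T : ℕ → ℕ → ℕ} (a b : ℕ × ℕ) :
    fkey T a ≤ fkey T b ↔
      (T a.1 a.2 < T b.1 b.2 ∨ (T a.1 a.2 = T b.1 b.2 ∧ a.2 < b.2) ∨
        (T a.1 a.2 = T b.1 b.2 ∧ a.2 = b.2 ∧ a.1 ≤ b.1)) := by
  simp only [fkey, Prod.Lex.le_iff]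
  tauto

lemma stdEntry_eq (μ : YoungDiagram) (T : ℕ → ℕ → ℕ) (a : ℕ × ℕ) (h : a ∈ μ.cells) :
    stdEntry μ T a.1 a.2 = (μ.cells.filter fun c => fkey T c ≤ fkey T a).card := by
  classical
  obtain ⟨i, j⟩ := a
  rw [stdEntry, if_pos h]
  congr 1
  apply Finset.filter_congr
  intro b _
  rw [fkey_le_iff]

lemma std_strict_mono (μ : YoungDiagram) (T : ℕ → ℕ → ℕ) {a b : ℕ × ℕ}
    (ha : a ∈ μ.cells) (hb : b ∈ μ.cells) (h : fkey T a < fkey T b) :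
    stdEntry μ T a.1 a.2 < stdEntry μ T b.1 b.2 := by
  classical
  rw [stdEntry_eq μ T a ha, stdEntry_eq μ T b hb]
  apply Finset.card_lt_card
  constructor
  · intro x hx
    rw [Finset.mem_filter] at hx ⊢
    exact ⟨hx.1, hx.2.trans h.le⟩
  · intro hsub
    have hbmem : b ∈ μ.cells.filter fun c => fkey T c ≤ fkey T b :=
      Finset.mem_filter.mpr ⟨hb, le_rfl⟩
    have := Finset.mem_filter.mp (hsub hbmem)
    exact absurd (lt_of_le_of_lt this.2 h) (lt_irrefl _)

lemma std_inj (μ : YoungDiagram) (T : ℕ → ℕ → ℕ) {a b : ℕ × ℕ}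
    (ha : a ∈ μ.cells) (hb : b ∈ μ.cells)
    (h : stdEntry μ T a.1 a.2 = stdEntry μ T b.1 b.2) : a = b := by
  rcases lt_trichotomy (fkey T a) (fkey T b) with h' | h' | h'
  · exact absurd h (ne_of_lt (std_strict_mono μ T ha hb h'))
  · exact fkey_inj h'
  · exact absurd h.symm (ne_of_lt (std_strict_mono μ T hb ha h'))

lemma std_pos (μ : YoungDiagram) (T : ℕ → ℕ → ℕ) {a : ℕ × ℕ} (ha : a ∈ μ.cells) :
    1 ≤ stdEntry μ T a.1 a.2 := by
  classical
  rw [stdEntry_eq μ T a ha]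
  exact Finset.card_pos.mpr ⟨a, Finset.mem_filter.mpr ⟨ha, le_rfl⟩⟩

lemma pred_exists (μ : YoungDiagram) (T : ℕ → ℕ → ℕ) {b : ℕ × ℕ}
    (hb : b ∈ μ.cells) (h2 : 2 ≤ stdEntry μ T b.1 b.2) :
    ∃ a ∈ μ.cells, stdEntry μ T a.1 a.2 = stdEntry μ T b.1 b.2 - 1 ∧ fkey T a < fkey T b := by
  classical
  set S := μ.cells.filter fun c => fkey T c < fkey T b with hS
  have hSb : μ.cells.filter (fun c => fkey T c ≤ fkey T b) = insert b S := by
    ext e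
    simp only [hS, Finset.mem_filter, Finset.mem_insert]
    constructor
    · rintro ⟨he, hle⟩
      rcases lt_or_eq_of_le hle with h' | h'
      · exact Or.inr ⟨he, h'⟩
      · exact Or.inl (fkey_inj h')
    · rintro (rfl | ⟨he, hlt⟩)
      · exact ⟨hb, le_rfl⟩
      · exact ⟨he, hlt.le⟩
  have hbnotS : b ∉ S := by simp [hS]
  have hcard : stdEntry μ T b.1 b.2 = S.card + 1 := by
    rw [stdEntry_eq μ T b hb, hSb, Finset.card_insert_of_notMem hbnotS]
  have hne : S.Nonempty := Finset.card_pos.mp (by omega)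
  obtain ⟨a, haS, hmax⟩ := S.exists_max_image (fkey T) hne
  have haS' := Finset.mem_filter.mp haS
  refine ⟨a, haS'.1, ?_, haS'.2⟩
  have hfa : μ.cells.filter (fun c => fkey T c ≤ fkey T a) = S := by
    ext e
    simp only [hS, Finset.mem_filter]
    constructor
    · rintro ⟨he, hle⟩
      exact ⟨he, lt_of_le_of_lt hle haS'.2⟩
    · rintro ⟨he, hlt⟩
      exact ⟨he, hmax e (Finset.mem_filter.mpr ⟨he, hlt⟩)⟩
  rw [stdEntry_eq μ T a haS'.1, hfa, hcard]
  omega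

theorem stmt4 (μ : YoungDiagram) (w : Equiv.Perm ℕ) (U : ℕ → ℕ → ℕ)
    (hU : U ∈ EGset μ w) (x y c d : ℕ)
    (hxy : (x, y) ∈ μ.cells) (hcd : (c, d) ∈ μ.cells)
    (hsweep : sweepEntry μ (stdEntry μ U) x y = sweepEntry μ (stdEntry μ U) c d)
    (hyd : y < d) :
    U x y ≤ U c d := by
  classical
  by_contra hlt
  push_neg at hlt
  -- `hlt : U c d < U x y`
  have hcdx : fkey U (c, d) < fkey U (x, y) := by
    rw [fkey, fkey, Prod.Lex.lt_iff]
    exact Or.inl hlt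
  set k1 := stdEntry μ U c d with hk1def
  set k2 := stdEntry μ U x y with hk2def
  have hk1 : k1 = stdEntry μ U (c, d).1 (c, d).2 := rfl
  have hk2 : k2 = stdEntry μ U (x, y).1 (x, y).2 := rfl
  have hk12 : k1 < k2 := by rw [hk1, hk2]; exact std_strict_mono μ U hcd hxy hcdx
  have hk1pos : 1 ≤ k1 := by rw [hk1]; exact std_pos μ U hcd
  -- no descents in `(k1, k2]`
  have hnod : ∀ k, k1 < k → k ≤ k2 → ¬ IsDescent μ (stdEntry μ U) k := by
    have hsub : (Finset.Icc 1 k1).filter (fun k => IsDescent μ (stdEntry μ U) k) ⊆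
        (Finset.Icc 1 k2).filter (fun k => IsDescent μ (stdEntry μ U) k) := by
      apply Finset.filter_subset_filter
      exact Finset.Icc_subset_Icc_right hk12.le
    have hcards : ((Finset.Icc 1 k2).filter (fun k => IsDescent μ (stdEntry μ U) k)).card ≤
        ((Finset.Icc 1 k1).filter (fun k => IsDescent μ (stdEntry μ U) k)).card := by
      have h1 : sweepEntry μ (stdEntry μ U) x y =
          ((Finset.Icc 1 k2).filter fun k => IsDescent μ (stdEntry μ U) k).card + 1 := by
        rw [sweepEntry, if_pos hxy]
      have h2 : sweepEntry μ (stdEntry μ U) c d =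
          ((Finset.Icc 1 k1).filter fun k => IsDescent μ (stdEntry μ U) k).card + 1 := by
        rw [sweepEntry, if_pos hcd]
      omega
    have heq := Finset.eq_of_subset_of_card_le hsub hcards
    intro k hk1k hkk2 hdesc
    have hmem : k ∈ (Finset.Icc 1 k2).filter (fun k => IsDescent μ (stdEntry μ U) k) :=
      Finset.mem_filter.mpr ⟨Finset.mem_Icc.mpr ⟨by omega, hkk2⟩, hdesc⟩
    rw [← heq] at hmem
    have := (Finset.mem_Icc.mp (Finset.mem_filter.mp hmem).1).2
    omega
  -- main induction: going down from label k2, columns strictly decrease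
  have main : ∀ j : ℕ, k1 ≤ k2 - j →
      ∃ a ∈ μ.cells, stdEntry μ U a.1 a.2 = k2 - j ∧ a.2 + j ≤ y := by
    intro j
    induction j with
    | zero =>
      intro _
      exact ⟨(x, y), hxy, by simp [hk2], by simp⟩
    | succ n ih =>
      intro hle
      have hle' : k1 ≤ k2 - n := by omega
      obtain ⟨a, ha, hstd, hcol⟩ := ih hle'
      have h2 : 2 ≤ stdEntry μ U a.1 a.2 := by omega
      obtain ⟨a', ha', hstd', _⟩ := pred_exists μ U ha h2
      have hnd := hnod (k2 - n) (by omega) (by omega)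
      have hcol' : a'.2 < a.2 := by
        by_contra hge
        push_neg at hge
        exact hnd ⟨a, ha, a', ha', hstd, by rw [hstd', hstd], hge⟩
      refine ⟨a', ha', by omega, by omega⟩
  obtain ⟨a, ha, hstd, hcol⟩ := main (k2 - k1) (by omega)
  have hak1 : stdEntry μ U a.1 a.2 = stdEntry μ U (c, d).1 (c, d).2 := by
    rw [hstd, ← hk1]; omega
  have := std_inj μ U ha hcd hak1
  subst this
  simp only at hcol
  omega
end

section
/- Let U be an Edelman–Greene tableau of type (λ, w). If two cells (x,y) and (c,d) have equal labels in U, then they have equal labels in sweep(std(U)), i.e., they lie in the same sweep of std(U). -/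
open Equiv

section Stmt5Aux

abbrev stdP (U : ℕ → ℕ → ℕ) (i j : ℕ) (c : ℕ × ℕ) : Prop :=
  U c.1 c.2 < U i j ∨ (U c.1 c.2 = U i j ∧ c.2 < j) ∨
    (U c.1 c.2 = U i j ∧ c.2 = j ∧ c.1 ≤ i)

lemma stdEntry_eq_card (μ : YoungDiagram) (U : ℕ → ℕ → ℕ) {i j : ℕ}
    (h : (i, j) ∈ μ.cells) :
    stdEntry μ U i j = (μ.cells.filter (stdP U i j)).card := by
  rw [stdEntry, if_pos h]

lemma stdEntry_lt (μ : YoungDiagram) (U : ℕ → ℕ → ℕ) {p q : ℕ × ℕ}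
    (hp : p ∈ μ.cells) (hq : q ∈ μ.cells)
    (h : ¬ stdP U p.1 p.2 q) :
    stdEntry μ U p.1 p.2 < stdEntry μ U q.1 q.2 := by
  rw [stdEntry_eq_card μ U hp, stdEntry_eq_card μ U hq]
  apply Finset.card_lt_card
  constructor
  · intro e he
    rw [Finset.mem_filter] at he ⊢
    refine ⟨he.1, ?_⟩
    have := he.2
    unfold stdP at this h ⊢
    omega
  · intro hsub
    have hqmem : q ∈ μ.cells.filter (stdP U q.1 q.2) := by
      rw [Finset.mem_filter]
      exact ⟨hq, by unfold stdP; omega⟩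
    have := hsub hqmem
    rw [Finset.mem_filter] at this
    exact h this.2

lemma stdP_of_le (μ : YoungDiagram) (U : ℕ → ℕ → ℕ) {p q : ℕ × ℕ}
    (hp : p ∈ μ.cells) (hq : q ∈ μ.cells)
    (h : stdEntry μ U q.1 q.2 ≤ stdEntry μ U p.1 p.2) :
    stdP U p.1 p.2 q := by
  by_contra hn
  exact absurd (stdEntry_lt μ U hp hq hn) (not_lt.2 h)

lemma le_U_of_std_le (μ : YoungDiagram) (U : ℕ → ℕ → ℕ) {p q : ℕ × ℕ}
    (hp : p ∈ μ.cells) (hq : q ∈ μ.cells)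
    (h : stdEntry μ U q.1 q.2 ≤ stdEntry μ U p.1 p.2) :
    U q.1 q.2 ≤ U p.1 p.2 := by
  have := stdP_of_le μ U hp hq h
  unfold stdP at this
  omega

lemma one_le_stdEntry (μ : YoungDiagram) (U : ℕ → ℕ → ℕ) {i j : ℕ}
    (h : (i, j) ∈ μ.cells) : 1 ≤ stdEntry μ U i j := by
  rw [stdEntry_eq_card μ U h]
  refine Finset.card_pos.mpr ⟨(i, j), Finset.mem_filter.mpr ⟨h, ?_⟩⟩
  unfold stdP
  dsimp only
  omega

lemma stmt5_aux (μ : YoungDiagram) (w : Equiv.Perm ℕ) (U : ℕ → ℕ → ℕ)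
    (hU : U ∈ EGset μ w) (x y c d : ℕ)
    (hxy : (x, y) ∈ μ.cells) (hcd : (c, d) ∈ μ.cells)
    (hlabel : U x y = U c d)
    (hle : stdEntry μ U x y ≤ stdEntry μ U c d) :
    sweepEntry μ (stdEntry μ U) x y = sweepEntry μ (stdEntry μ U) c d := by
  classical
  obtain ⟨_, hcol, _, _⟩ := hU
  have key : ∀ k, IsDescent μ (stdEntry μ U) k → k ≤ stdEntry μ U c d →
      k ≤ stdEntry μ U x y := by
    intro k hdesc hkb
    by_contra hka
    push_neg at hka
    obtain ⟨p, hp, q, hq, hpk, hqk, hcle⟩ := hdesc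
    have h1 : 1 ≤ stdEntry μ U x y := one_le_stdEntry μ U hxy
    -- U p = U x y
    have hUxp : U x y ≤ U p.1 p.2 :=
      le_U_of_std_le μ U hp (q := (x, y)) hxy (by dsimp only; rw [hpk]; omega)
    have hUpc : U p.1 p.2 ≤ U c d :=
      le_U_of_std_le μ U (p := (c, d)) hcd hp (by dsimp only; rw [hpk]; exact hkb)
    have hUxq : U x y ≤ U q.1 q.2 :=
      le_U_of_std_le μ U hq (q := (x, y)) hxy (by dsimp only; rw [hqk]; omega)
    have hUqc : U q.1 q.2 ≤ U c d :=
      le_U_of_std_le μ U (p := (c, d)) hcd hq (by dsimp only; rw [hqk]; omega)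
    have hUeq : U q.1 q.2 = U p.1 p.2 := by omega
    -- q ⪯ p since std q = k-1 ≤ k = std p
    have hqp : stdP U p.1 p.2 q := stdP_of_le μ U hp hq (by rw [hpk, hqk]; omega)
    unfold stdP at hqp
    have h22 : q.2 = p.2 := by omega
    have h11 : q.1 ≤ p.1 := by omega
    have h1eq : q.1 = p.1 := by
      rcases lt_or_eq_of_le h11 with hlt | heq
      · have hc2 := hcol q.1 p.1 p.2 hlt (by simpa using hp)
        rw [h22] at hUeq
        omega
      · exact heq
    have : q = p := Prod.ext h1eq h22
    rw [this, hpk] at hqk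
    omega
  unfold sweepEntry
  rw [if_pos hxy, if_pos hcd]
  refine congrArg (· + 1) (congrArg Finset.card ?_)
  ext k
  simp only [Finset.mem_filter, Finset.mem_Icc]
  constructor
  · rintro ⟨⟨hk1, hk2⟩, hd⟩
    exact ⟨⟨hk1, le_trans hk2 hle⟩, hd⟩
  · rintro ⟨⟨hk1, hk2⟩, hd⟩
    exact ⟨⟨hk1, key k hd hk2⟩, hd⟩

end Stmt5Aux

theorem stmt5 (μ : YoungDiagram) (w : Equiv.Perm ℕ) (U : ℕ → ℕ → ℕ)
    (hU : U ∈ EGset μ w) (x y c d : ℕ)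
    (hxy : (x, y) ∈ μ.cells) (hcd : (c, d) ∈ μ.cells)
    (hlabel : U x y = U c d) :
    sweepEntry μ (stdEntry μ U) x y = sweepEntry μ (stdEntry μ U) c d := by
  rcases le_total (stdEntry μ U x y) (stdEntry μ U c d) with h | h
  · exact stmt5_aux μ w U hU x y c d hxy hcd hlabel h
  · exact (stmt5_aux μ w U hU c d x y hcd hxy hlabel.symm h).symm
end

section
/- Let U be an Edelman–Greene tableau of type (λ, w) and let i < j. If cell (x,y) lies in the i-th sweep of std(U) and cell (c,d) lies in the j-th sweep of std(U), then the label of (x,y) in U is strictly less than the label of (c,d) in U. -/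
open Equiv

open scoped Classical

/-- The lexicographic comparison used by `stdEntry`. -/
def relA (U : ℕ → ℕ → ℕ) (e f : ℕ × ℕ) : Prop :=
  U e.1 e.2 < U f.1 f.2 ∨ (U e.1 e.2 = U f.1 f.2 ∧ e.2 < f.2) ∨
    (U e.1 e.2 = U f.1 f.2 ∧ e.2 = f.2 ∧ e.1 ≤ f.1)

lemma relA_refl (U : ℕ → ℕ → ℕ) (e : ℕ × ℕ) : relA U e e := by unfold relA; omega

lemma relA_total (U : ℕ → ℕ → ℕ) (e f : ℕ × ℕ) : relA U e f ∨ relA U f e := by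
  unfold relA; omega

lemma relA_trans {U : ℕ → ℕ → ℕ} {e f g : ℕ × ℕ} (h1 : relA U e f) (h2 : relA U f g) :
    relA U e g := by unfold relA at *; omega

lemma relA_antisymm {U : ℕ → ℕ → ℕ} {e f : ℕ × ℕ} (h1 : relA U e f) (h2 : relA U f e) :
    e = f := by
  obtain ⟨e1, e2⟩ := e; obtain ⟨f1, f2⟩ := f
  unfold relA at h1 h2
  dsimp only at h1 h2
  have h : e1 = f1 ∧ e2 = f2 := by omega
  simp [Prod.ext_iff, h.1, h.2]

lemma stdEntry_eq_card_s6 (μ : YoungDiagram) (U : ℕ → ℕ → ℕ) {e : ℕ × ℕ} (h : e ∈ μ.cells) :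
    stdEntry μ U e.1 e.2 = (μ.cells.filter fun c => relA U c e).card := by
  rw [stdEntry, if_pos (by simpa using h)]
  exact congrArg Finset.card (Finset.filter_congr fun c _ => by unfold relA; exact Iff.rfl)

lemma std_le {μ : YoungDiagram} {U : ℕ → ℕ → ℕ} {e f : ℕ × ℕ}
    (he : e ∈ μ.cells) (hf : f ∈ μ.cells) (h : relA U e f) :
    stdEntry μ U e.1 e.2 ≤ stdEntry μ U f.1 f.2 := by
  rw [stdEntry_eq_card_s6 μ U he, stdEntry_eq_card_s6 μ U hf]
  refine Finset.card_le_card (fun g hg => ?_)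
  rw [Finset.mem_filter] at hg ⊢
  exact ⟨hg.1, relA_trans hg.2 h⟩

lemma std_lt {μ : YoungDiagram} {U : ℕ → ℕ → ℕ} {e f : ℕ × ℕ}
    (he : e ∈ μ.cells) (hf : f ∈ μ.cells) (h : relA U e f) (hne : e ≠ f) :
    stdEntry μ U e.1 e.2 < stdEntry μ U f.1 f.2 := by
  rw [stdEntry_eq_card_s6 μ U he, stdEntry_eq_card_s6 μ U hf]
  refine Finset.card_lt_card ?_
  have hsub : (μ.cells.filter fun c => relA U c e) ⊆ (μ.cells.filter fun c => relA U c f) := by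
    intro g hg
    rw [Finset.mem_filter] at hg ⊢
    exact ⟨hg.1, relA_trans hg.2 h⟩
  refine (Finset.ssubset_iff_of_subset hsub).mpr ⟨f, ?_, ?_⟩
  · exact Finset.mem_filter.mpr ⟨hf, relA_refl U f⟩
  · intro hmem
    exact hne (relA_antisymm h (Finset.mem_filter.mp hmem).2)

lemma sweep_eq_aux (μ : YoungDiagram) (U : ℕ → ℕ → ℕ)
    (hcol : ∀ i1 i2 j, i1 < i2 → (i2, j) ∈ μ.cells → U i1 j < U i2 j)
    {e f : ℕ × ℕ} (he : e ∈ μ.cells) (hf : f ∈ μ.cells)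
    (hUeq : U e.1 e.2 = U f.1 f.2)
    (hlt : stdEntry μ U e.1 e.2 < stdEntry μ U f.1 f.2) :
    ((Finset.Icc 1 (stdEntry μ U f.1 f.2)).filter (fun k => IsDescent μ (stdEntry μ U) k)).card
      = ((Finset.Icc 1 (stdEntry μ U e.1 e.2)).filter
          (fun k => IsDescent μ (stdEntry μ U) k)).card := by
  set a := stdEntry μ U e.1 e.2 with ha
  set b := stdEntry μ U f.1 f.2 with hb
  have key : ∀ g ∈ μ.cells, a ≤ stdEntry μ U g.1 g.2 → stdEntry μ U g.1 g.2 ≤ b →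
      U g.1 g.2 = U e.1 e.2 := by
    intro g hg h1 h2
    rcases lt_trichotomy (U g.1 g.2) (U e.1 e.2) with h | h | h
    · have hr : relA U g e := Or.inl h
      have hne : g ≠ e := by intro heq; rw [heq] at h; omega
      have := std_lt hg he hr hne
      omega
    · exact h
    · have hr : relA U f g := Or.inl (by omega)
      have hne : f ≠ g := by intro heq; rw [heq] at hUeq; omega
      have := std_lt hf hg hr hne
      omega
  have nodesc : ∀ k, a < k → k ≤ b → ¬ IsDescent μ (stdEntry μ U) k := by
    rintro k hak hkb ⟨c1, hc1, c2, hc2, k1, k2, hcc⟩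
    have hb1 : a ≤ stdEntry μ U c1.1 c1.2 := by omega
    have hb2 : stdEntry μ U c1.1 c1.2 ≤ b := by omega
    have hb3 : a ≤ stdEntry μ U c2.1 c2.2 := by omega
    have hb4 : stdEntry μ U c2.1 c2.2 ≤ b := by omega
    have hu1 := key c1 hc1 hb1 hb2
    have hu2 := key c2 hc2 hb3 hb4
    have h12 : U c1.1 c1.2 = U c2.1 c2.2 := by omega
    have hnrel : ¬ relA U c1 c2 := by
      intro hr
      have := std_le hc1 hc2 hr
      omega
    have hc2eq : c1.2 = c2.2 := by unfold relA at hnrel; omega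
    have hrw : c2.1 < c1.1 := by unfold relA at hnrel; omega
    have hlt2 : U c2.1 c1.2 < U c1.1 c1.2 := hcol c2.1 c1.1 c1.2 hrw (by exact hc1)
    rw [hc2eq] at hlt2 h12
    omega
  apply congrArg
  apply Finset.ext
  intro k
  simp only [Finset.mem_filter, Finset.mem_Icc]
  constructor
  · rintro ⟨⟨h1, h2⟩, hd⟩
    refine ⟨⟨h1, ?_⟩, hd⟩
    by_contra hle
    exact nodesc k (by omega) h2 hd
  · rintro ⟨⟨h1, h2⟩, hd⟩
    exact ⟨⟨h1, by omega⟩, hd⟩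

theorem stmt6 (μ : YoungDiagram) (w : Equiv.Perm ℕ) (U : ℕ → ℕ → ℕ)
    (hU : U ∈ EGset μ w) (i j : ℕ) (hij : i < j) (x y c d : ℕ)
    (hxy : (x, y) ∈ μ.cells) (hcd : (c, d) ∈ μ.cells)
    (hi : sweepEntry μ (stdEntry μ U) x y = i)
    (hj : sweepEntry μ (stdEntry μ U) c d = j) :
    U x y < U c d := by
  obtain ⟨hrow, hcol, hzero, hred⟩ := hU
  rcases lt_trichotomy (U x y) (U c d) with h | h | h
  · exact h
  · exfalso
    unfold sweepEntry at hi hj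
    rw [if_pos hxy] at hi
    rw [if_pos hcd] at hj
    rcases lt_trichotomy (stdEntry μ U x y) (stdEntry μ U c d) with hab | hab | hab
    · have := sweep_eq_aux μ U hcol (e := (x, y)) (f := (c, d)) hxy hcd (by exact h) hab
      dsimp only at this
      omega
    · rw [hab] at hi
      omega
    · have := sweep_eq_aux μ U hcol (e := (c, d)) (f := (x, y)) hcd hxy (by exact h.symm) hab
      dsimp only at this
      omega
  · exfalso
    have hr : relA U (c, d) (x, y) := Or.inl h
    have hne : (c, d) ≠ (x, y) := by
      intro heq
      have h1 : c = x := congrArg Prod.fst heq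
      have h2 : d = y := congrArg Prod.snd heq
      rw [h1, h2] at h
      omega
    have hb := std_lt hcd hxy hr hne
    dsimp only at hb
    unfold sweepEntry at hi hj
    rw [if_pos hxy] at hi
    rw [if_pos hcd] at hj
    have hmono : ((Finset.Icc 1 (stdEntry μ U c d)).filter
          (fun k => IsDescent μ (stdEntry μ U) k)).card
        ≤ ((Finset.Icc 1 (stdEntry μ U x y)).filter
          (fun k => IsDescent μ (stdEntry μ U) k)).card :=
      Finset.card_le_card (Finset.filter_subset_filter _
        (Finset.Icc_subset_Icc_right (le_of_lt hb)))
    omega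
end

section
/- If w ∈ S_∞ is totally commutative, then w is λ-maximal for every partition λ of size ℓ(w); that is, a_{w,λ} = f^λ for all λ with |λ| = ℓ(w). -/
open Equiv

namespace EGaux

lemma dist_ge2 {a b : ℕ} : 2 ≤ Nat.dist a b ↔ a + 2 ≤ b ∨ b + 2 ≤ a := by
  simp [Nat.dist]; omega

lemma egs_apply (a x : ℕ) : EGs a x = if x = a then a + 1 else if x = a + 1 then a else x := by
  unfold EGs
  split_ifs with h1 h2
  · simp [h1]
  · simp [h2]
  · exact Equiv.swap_apply_of_ne_of_ne h1 h2

lemma egs_commute {a b : ℕ} (h : 2 ≤ Nat.dist a b) : Commute (EGs a) (EGs b) := by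
  rw [dist_ge2] at h
  ext x
  simp only [Equiv.Perm.mul_apply, egs_apply]
  split_ifs <;> omega

/-- A list of letters that is pairwise "distance ≥ 2" in the symmetric sense. -/
def Good (l : List ℕ) : Prop :=
  l.Nodup ∧ ∀ a ∈ l, ∀ b ∈ l, a ≠ b → 2 ≤ Nat.dist a b

lemma good_of_pairwise {l : List ℕ} (h : l.Pairwise fun a b => 2 ≤ Nat.dist a b) : Good l := by
  refine ⟨h.imp fun {a b} hab => by rw [dist_ge2] at hab; omega, ?_⟩
  intro a ha b hb hab
  exact @List.Pairwise.forall _ _ _ ⟨fun x y hxy => by rwa [Nat.dist_comm]⟩ h a ha b hb hab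

lemma prod_fixed : ∀ (m : List ℕ) (x : ℕ), (∀ b ∈ m, x ≠ b ∧ x ≠ b + 1) →
    (m.map EGs).prod x = x
  | [], x, _ => rfl
  | b :: m, x, h => by
    simp only [List.map_cons, List.prod_cons, Equiv.Perm.mul_apply]
    rw [prod_fixed m x fun c hc => h c (List.mem_cons_of_mem _ hc)]
    have := h b (List.mem_cons_self ..)
    rw [egs_apply]
    simp [this.1, this.2]


lemma Good.tail {b : ℕ} {m : List ℕ} (h : Good (b :: m)) : Good m :=
  ⟨h.1.of_cons, fun x hx y hy => h.2 x (List.mem_cons_of_mem _ hx) y (List.mem_cons_of_mem _ hy)⟩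

lemma good_prod_apply : ∀ {l : List ℕ}, Good l → ∀ a ∈ l,
    (l.map EGs).prod a = a + 1 ∧ (l.map EGs).prod (a + 1) = a := by
  intro l
  induction l with
  | nil => intro _ a ha; simp at ha
  | cons b m ih =>
    intro hg a ha
    have hgm := hg.tail
    simp only [List.map_cons, List.prod_cons, Equiv.Perm.mul_apply]
    rcases List.mem_cons.mp ha with rfl | ham
    · have hfix : ∀ x, x = a ∨ x = a + 1 → (m.map EGs).prod x = x := by
        intro x hx
        apply prod_fixed
        intro c hc
        have hd : 2 ≤ Nat.dist a c := hg.2 a (List.mem_cons_self ..) c (List.mem_cons_of_mem _ hc)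
          (fun h => (hg.1.notMem (h ▸ hc)).elim)
        rw [dist_ge2] at hd; omega
      rw [hfix a (Or.inl rfl), hfix (a+1) (Or.inr rfl), egs_apply, egs_apply]
      simp
    · have := ih hgm a ham
      rw [this.1, this.2]
      have hd : 2 ≤ Nat.dist b a := hg.2 b (List.mem_cons_self ..) a (List.mem_cons_of_mem _ ham)
        (fun h => (hg.1.notMem (h ▸ ham)).elim)
      rw [dist_ge2] at hd
      rw [egs_apply, egs_apply]
      constructor <;> · split_ifs <;> omega

lemma good_prod_eq_succ_iff {l : List ℕ} (hg : Good l) (x : ℕ) :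
    (l.map EGs).prod x = x + 1 ↔ x ∈ l := by
  constructor
  · intro hx
    by_contra hxl
    by_cases h1 : ∃ a ∈ l, x = a + 1
    · obtain ⟨a, ha, rfl⟩ := h1
      have := (good_prod_apply hg a ha).2
      omega
    · push_neg at h1
      have : (l.map EGs).prod x = x := by
        apply prod_fixed
        intro b hb
        exact ⟨fun h => hxl (h ▸ hb), h1 b hb⟩
      omega
  · intro hx
    exact (good_prod_apply hg x hx).1

lemma moved_mem {m : List ℕ} {x : ℕ} (h : (m.map EGs).prod x ≠ x) :
    ∃ b ∈ m, x = b ∨ x = b + 1 := by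
  by_contra hc
  push_neg at hc
  exact h (prod_fixed m x fun b hb => ⟨(hc b hb).1, (hc b hb).2⟩)

/-- dominoes -/
def D (a : ℕ) : Finset ℕ := {a, a + 1}

lemma mem_D {a x : ℕ} : x ∈ D a ↔ x = a ∨ x = a + 1 := by simp [D]

lemma card_D (a : ℕ) : (D a).card = 2 := by
  rw [D, Finset.card_insert_of_notMem (by simp), Finset.card_singleton]

lemma disjoint_D {a b : ℕ} (h : 2 ≤ Nat.dist a b) : Disjoint (D a) (D b) := by
  rw [dist_ge2] at h
  rw [Finset.disjoint_left]
  intro x hx hx'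
  rw [mem_D] at hx hx'
  omega

lemma card_S {l : List ℕ} (hg : Good l) :
    (l.toFinset.biUnion D).card = 2 * l.length := by
  rw [Finset.card_biUnion, Finset.sum_congr rfl fun a _ => card_D a, Finset.sum_const,
    smul_eq_mul, List.toFinset_card_of_nodup hg.1, mul_comm]
  intro a ha b hb hab
  exact disjoint_D (hg.2 a (List.mem_toFinset.mp ha) b (List.mem_toFinset.mp hb) hab)

lemma disjoint_of_card_biUnion : ∀ (s : Finset ℕ) (f : ℕ → Finset ℕ),
    (s.biUnion f).card = ∑ b ∈ s, (f b).card →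
    ∀ a ∈ s, ∀ b ∈ s, a ≠ b → Disjoint (f a) (f b) := by
  intro s f
  induction s using Finset.induction_on with
  | empty => simp
  | @insert a s ha ih =>
    intro hcard
    rw [Finset.biUnion_insert, Finset.sum_insert ha] at hcard
    have h1 : ((f a) ∪ s.biUnion f).card ≤ (f a).card + (s.biUnion f).card :=
      Finset.card_union_le _ _
    have h2 : (s.biUnion f).card ≤ ∑ b ∈ s, (f b).card := Finset.card_biUnion_le
    have hXeq : (s.biUnion f).card = ∑ b ∈ s, (f b).card := by omega
    have hdisj : Disjoint (f a) (s.biUnion f) := by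
      rw [← Finset.card_union_eq_card_add_card]
      omega
    have ihd := ih hXeq
    intro x hx y hy hxy
    rcases Finset.mem_insert.mp hx with rfl | hxs
    · rcases Finset.mem_insert.mp hy with rfl | hys
      · exact absurd rfl hxy
      · exact hdisj.mono_right (Finset.subset_biUnion_of_mem f hys)
    · rcases Finset.mem_insert.mp hy with rfl | hys
      · exact (hdisj.mono_right (Finset.subset_biUnion_of_mem f hxs)).symm
      · exact ihd x hxs y hys hxy
lemma reduced_of_perm {w : Equiv.Perm ℕ} {l : List ℕ}
    (hl : IsReducedWord w l) (hg : Good l) {m : List ℕ} (hperm : m.Perm l) :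
    IsReducedWord w m := by
  constructor
  · have hpc : (m.map EGs).Pairwise Commute := by
      rw [List.pairwise_map]
      have hnd : m.Nodup := hperm.nodup_iff.mpr hg.1
      exact hnd.imp_of_mem fun {a b} ha hb hne =>
        egs_commute (hg.2 a (hperm.mem_iff.mp ha) b (hperm.mem_iff.mp hb) hne)
    rw [(hperm.map EGs).prod_eq' hpc, hl.1]
  · rw [hperm.length_eq, hl.2]

lemma perm_of_reduced {w : Equiv.Perm ℕ} {l : List ℕ}
    (hl : IsReducedWord w l) (hg : Good l) {m : List ℕ} (hm : IsReducedWord w m) :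
    m.Perm l := by
  have hk : m.length = l.length := hm.2.trans hl.2.symm
  set S := l.toFinset.biUnion D with hS
  set T := m.toFinset.biUnion D with hT
  have hST : S ⊆ T := by
    intro x hx
    obtain ⟨a, ha, hxa⟩ := Finset.mem_biUnion.mp hx
    rw [mem_D] at hxa
    have hal : a ∈ l := List.mem_toFinset.mp ha
    have hwx : w x ≠ x := by
      rcases hxa with h | h
      · rw [h, ← hl.1]; have := (good_prod_apply hg a hal).1; omega
      · rw [h, ← hl.1]; have := (good_prod_apply hg a hal).2; omega
    rw [← hm.1] at hwx
    obtain ⟨b, hb, hxb⟩ := moved_mem hwx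
    exact Finset.mem_biUnion.mpr ⟨b, List.mem_toFinset.mpr hb, mem_D.mpr hxb⟩
  have hcardS : S.card = 2 * l.length := card_S hg
  have hTle : T.card ≤ ∑ b ∈ m.toFinset, (D b).card := Finset.card_biUnion_le
  have hsum : ∑ b ∈ m.toFinset, (D b).card = 2 * m.toFinset.card := by
    rw [Finset.sum_congr rfl fun b _ => card_D b, Finset.sum_const, smul_eq_mul, mul_comm]
  have htfle : m.toFinset.card ≤ m.length := m.toFinset_card_le
  have hSle : S.card ≤ T.card := Finset.card_le_card hST
  have htfcard : m.toFinset.card = m.length := by omega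
  have hnodup : m.Nodup := by
    rw [List.card_toFinset] at htfcard
    exact List.dedup_eq_self.mp (m.dedup_sublist.eq_of_length htfcard)
  have hTsum : T.card = ∑ b ∈ m.toFinset, (D b).card := by omega
  have hgm : Good m := by
    refine ⟨hnodup, fun a ha b hb hab => ?_⟩
    by_contra hnd
    rw [dist_ge2] at hnd
    push_neg at hnd
    have hdisj := disjoint_of_card_biUnion _ D hTsum a (List.mem_toFinset.mpr ha)
      b (List.mem_toFinset.mpr hb) hab
    have h1 : b = a + 1 ∨ a = b + 1 := by omega
    rcases h1 with rfl | rfl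
    · exact Finset.disjoint_left.mp hdisj (mem_D.mpr (Or.inr rfl)) (mem_D.mpr (Or.inl rfl))
    · exact Finset.disjoint_left.mp hdisj (mem_D.mpr (Or.inl rfl)) (mem_D.mpr (Or.inr rfl))
  have htf : m.toFinset = l.toFinset := by
    ext x
    rw [List.mem_toFinset, List.mem_toFinset, ← good_prod_eq_succ_iff hgm,
      ← good_prod_eq_succ_iff hg, hm.1, hl.1]
  exact List.perm_of_nodup_nodup_toFinset_eq hnodup hg.1 htf
def cellList (μ : YoungDiagram) : List (ℕ × ℕ) :=
  (List.range (μ.colLen 0)).flatMap fun i =>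
    ((List.range (μ.rowLen i)).reverse).map fun j => (i, j)

lemma readingWord_eq (μ : YoungDiagram) (T : ℕ → ℕ → ℕ) :
    readingWord μ T = (cellList μ).map fun c => T c.1 c.2 := by
  simp [readingWord, cellList, List.map_flatMap, List.map_map, Function.comp_def]

lemma mem_cellList {μ : YoungDiagram} {c : ℕ × ℕ} : c ∈ cellList μ ↔ c ∈ μ.cells := by
  obtain ⟨i, j⟩ := c
  simp only [cellList, List.mem_flatMap, List.mem_map, List.mem_reverse, List.mem_range,
    YoungDiagram.mem_cells, Prod.mk.injEq]
  constructor
  · rintro ⟨i', hi', j', hj', rfl, rfl⟩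
    exact YoungDiagram.mem_iff_lt_rowLen.mpr hj'
  · intro hij
    refine ⟨i, ?_, j, YoungDiagram.mem_iff_lt_rowLen.mp hij, rfl, rfl⟩
    exact YoungDiagram.mem_iff_lt_colLen.mp (μ.up_left_mem le_rfl (Nat.zero_le j) hij)

lemma cellList_nodup (μ : YoungDiagram) : (cellList μ).Nodup := by
  rw [cellList, List.nodup_flatMap]
  constructor
  · intro i _
    exact (List.nodup_reverse.mpr List.nodup_range).map
      (fun j j' h => (Prod.mk.injEq .. |>.mp h).2)
  · refine List.pairwise_lt_range.imp ?_
    intro i i' hii' x hx hx'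
    simp only [List.mem_map] at hx hx'
    obtain ⟨j, _, rfl⟩ := hx
    obtain ⟨j', _, h⟩ := hx'
    exact absurd ((Prod.mk.injEq .. |>.mp h).1) (by omega)

lemma cellList_toFinset (μ : YoungDiagram) : (cellList μ).toFinset = μ.cells :=
  Finset.ext fun c => by rw [List.mem_toFinset, mem_cellList]

lemma cellList_length (μ : YoungDiagram) : (cellList μ).length = μ.card := by
  rw [← List.toFinset_card_of_nodup (cellList_nodup μ), cellList_toFinset]

/-- rank of `x` in `A`, 1-based -/
def rk (A : Finset ℕ) (x : ℕ) : ℕ := (A.sort (· ≤ ·)).idxOf x + 1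

/-- the `y`-th smallest element of `A`, 1-based -/
def unrk (A : Finset ℕ) (y : ℕ) : ℕ := (A.sort (· ≤ ·)).getD (y - 1) 0

lemma rk_mem {A : Finset ℕ} {k : ℕ} (hA : A.card = k) {x : ℕ} (hx : x ∈ A) :
    rk A x ∈ Finset.Icc 1 k := by
  have h : (A.sort (· ≤ ·)).idxOf x < (A.sort (· ≤ ·)).length :=
    List.idxOf_lt_length_iff.mpr ((Finset.mem_sort _).mpr hx)
  rw [Finset.length_sort, hA] at h
  simp only [rk, Finset.mem_Icc]
  omega

lemma unrk_rk {A : Finset ℕ} {x : ℕ} (hx : x ∈ A) : unrk A (rk A x) = x := by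
  have h : (A.sort (· ≤ ·)).idxOf x < (A.sort (· ≤ ·)).length :=
    List.idxOf_lt_length_iff.mpr ((Finset.mem_sort _).mpr hx)
  rw [unrk, rk, Nat.add_sub_cancel, List.getD_eq_getElem _ _ h]
  exact List.getElem_idxOf h

lemma unrk_mem {A : Finset ℕ} {k : ℕ} (hA : A.card = k) {y : ℕ}
    (hy : y ∈ Finset.Icc 1 k) : unrk A y ∈ A := by
  rw [Finset.mem_Icc] at hy
  have h : y - 1 < (A.sort (· ≤ ·)).length := by rw [Finset.length_sort, hA]; omega
  rw [unrk, List.getD_eq_getElem _ _ h]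
  exact (Finset.mem_sort _).mp (List.getElem_mem h)

lemma rk_unrk {A : Finset ℕ} {k : ℕ} (hA : A.card = k) {y : ℕ}
    (hy : y ∈ Finset.Icc 1 k) : rk A (unrk A y) = y := by
  rw [Finset.mem_Icc] at hy
  have h : y - 1 < (A.sort (· ≤ ·)).length := by rw [Finset.length_sort, hA]; omega
  rw [unrk, rk, List.getD_eq_getElem _ _ h,
    (A.sort_nodup (· ≤ ·)).idxOf_getElem _ h]
  omega

lemma rk_lt_rk {A : Finset ℕ} {x x' : ℕ} (hx : x ∈ A) (hx' : x' ∈ A) :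
    rk A x < rk A x' ↔ x < x' := by
  have h : (A.sort (· ≤ ·)).idxOf x < (A.sort (· ≤ ·)).length :=
    List.idxOf_lt_length_iff.mpr ((Finset.mem_sort _).mpr hx)
  have h' : (A.sort (· ≤ ·)).idxOf x' < (A.sort (· ≤ ·)).length :=
    List.idxOf_lt_length_iff.mpr ((Finset.mem_sort _).mpr hx')
  have hsm := (A.sortedLT_sort).strictMono_get
  rw [rk, rk, Nat.add_lt_add_iff_right]
  constructor
  · intro hlt
    have := hsm (a := ⟨_, h⟩) (b := ⟨_, h'⟩) hlt
    rwa [List.idxOf_get, List.idxOf_get] at this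
  · intro hlt
    by_contra hge
    push_neg at hge
    rcases lt_or_eq_of_le hge with hgt | heq
    · have := hsm (a := ⟨_, h'⟩) (b := ⟨_, h⟩) hgt
      rw [List.idxOf_get, List.idxOf_get] at this
      omega
    · have : x = x' := by
        rw [← List.idxOf_get h, ← List.idxOf_get h']
        congr 1
        exact Fin.ext heq.symm
      omega

lemma unrk_lt_unrk {A : Finset ℕ} {k : ℕ} (hA : A.card = k) {y y' : ℕ}
    (hy : y ∈ Finset.Icc 1 k) (hy' : y' ∈ Finset.Icc 1 k) :
    unrk A y < unrk A y' ↔ y < y' := by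
  rw [← rk_lt_rk (unrk_mem hA hy) (unrk_mem hA hy'), rk_unrk hA hy, rk_unrk hA hy']
lemma toFinset_map' {α β : Type*} [DecidableEq α] [DecidableEq β] (l : List α) (f : α → β) :
    (l.map f).toFinset = l.toFinset.image f := by
  ext x; simp

lemma rk_image {A : Finset ℕ} {k : ℕ} (hA : A.card = k) :
    A.image (rk A) = Finset.Icc 1 k := by
  ext y
  constructor
  · intro hy
    obtain ⟨x, hx, rfl⟩ := Finset.mem_image.mp hy
    exact rk_mem hA hx
  · intro hy
    exact Finset.mem_image.mpr ⟨unrk A y, unrk_mem hA hy, rk_unrk hA hy⟩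

lemma unrk_image {A : Finset ℕ} {k : ℕ} (hA : A.card = k) :
    (Finset.Icc 1 k).image (unrk A) = A := by
  ext x
  constructor
  · intro hx
    obtain ⟨y, hy, rfl⟩ := Finset.mem_image.mp hx
    exact unrk_mem hA hy
  · intro hx
    exact Finset.mem_image.mpr ⟨rk A x, rk_mem hA hx, unrk_rk hx⟩

end EGaux

theorem stmt13 (w : Equiv.Perm ℕ) (h : TotallyCommutative w)
    (μ : YoungDiagram) (hμ : μ.card = coxLength w) :
    (EGset μ w).ncard = (SYTset μ).ncard := by
  classical
  obtain ⟨l, hl, hpair⟩ := h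
  have hg : EGaux.Good l := EGaux.good_of_pairwise hpair
  have hkl : l.length = μ.card := by rw [hμ, ← hl.2]
  set A := l.toFinset with hA
  have hAcard : A.card = μ.card := by
    rw [hA, List.toFinset_card_of_nodup hg.1, hkl]
  set F : (ℕ → ℕ → ℕ) → (ℕ → ℕ → ℕ) :=
    fun T i j => if (i, j) ∈ μ.cells then EGaux.rk A (T i j) else 0 with hF
  set G : (ℕ → ℕ → ℕ) → (ℕ → ℕ → ℕ) :=
    fun U i j => if (i, j) ∈ μ.cells then EGaux.unrk A (U i j) else 0 with hG
  -- facts about EG tableaux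
  have hEGA : ∀ T ∈ EGset μ w, ∀ c ∈ μ.cells, T c.1 c.2 ∈ A := by
    intro T hT c hc
    have hperm : (readingWord μ T).Perm l := EGaux.perm_of_reduced hl hg hT.2.2.2
    have himg : μ.cells.image (fun c => T c.1 c.2) = A := by
      rw [← EGaux.cellList_toFinset μ, ← EGaux.toFinset_map', ← EGaux.readingWord_eq]
      exact List.toFinset_eq_of_perm _ _ hperm
    rw [← himg]
    exact Finset.mem_image_of_mem _ hc
  have hSYTIcc : ∀ U ∈ SYTset μ, ∀ c ∈ μ.cells, U c.1 c.2 ∈ Finset.Icc 1 μ.card := by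
    intro U hU c hc
    rw [← hU.2.2.2]
    exact Finset.mem_image_of_mem _ hc
  -- F maps EG to SYT
  have hmapsF : ∀ T ∈ EGset μ w, F T ∈ SYTset μ := by
    intro T hT
    have himg : μ.cells.image (fun c => T c.1 c.2) = A := by
      rw [← EGaux.cellList_toFinset μ, ← EGaux.toFinset_map', ← EGaux.readingWord_eq]
      exact List.toFinset_eq_of_perm _ _ (EGaux.perm_of_reduced hl hg hT.2.2.2)
    refine ⟨?_, ?_, ?_, ?_⟩
    · intro i j1 j2 hj hmem2
      have hmem1 : (i, j1) ∈ μ.cells := by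
        rw [YoungDiagram.mem_cells] at hmem2 ⊢
        exact μ.up_left_mem le_rfl hj.le hmem2
      simp only [hF, if_pos hmem1, if_pos hmem2]
      exact (EGaux.rk_lt_rk (hEGA T hT _ hmem1) (hEGA T hT _ hmem2)).mpr
        (hT.1 i j1 j2 hj hmem2)
    · intro i1 i2 j hi hmem2
      have hmem1 : (i1, j) ∈ μ.cells := by
        rw [YoungDiagram.mem_cells] at hmem2 ⊢
        exact μ.up_left_mem hi.le le_rfl hmem2
      simp only [hF, if_pos hmem1, if_pos hmem2]
      exact (EGaux.rk_lt_rk (hEGA T hT _ hmem1) (hEGA T hT _ hmem2)).mpr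
        (hT.2.1 i1 i2 j hi hmem2)
    · intro i j hij
      simp only [hF, if_neg hij]
    · have h1 : μ.cells.image (fun c => F T c.1 c.2) =
          μ.cells.image (fun c => EGaux.rk A (T c.1 c.2)) := by
        apply Finset.image_congr
        intro c hc
        exact if_pos (show ((c.1, c.2) : ℕ × ℕ) ∈ μ.cells by simpa using hc)
      rw [h1, show (fun c : ℕ × ℕ => EGaux.rk A (T c.1 c.2)) =
        (EGaux.rk A) ∘ (fun c : ℕ × ℕ => T c.1 c.2) from rfl, ← Finset.image_image, himg,
        EGaux.rk_image hAcard]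
  -- G maps SYT to EG
  have hmapsG : ∀ U ∈ SYTset μ, G U ∈ EGset μ w := by
    intro U hU
    have hUinj : Set.InjOn (fun c : ℕ × ℕ => U c.1 c.2) μ.cells := by
      apply Finset.injOn_of_card_image_eq
      rw [hU.2.2.2, Nat.card_Icc]
      simp [YoungDiagram.card]
    refine ⟨?_, ?_, ?_, ?_⟩
    · intro i j1 j2 hj hmem2
      have hmem1 : (i, j1) ∈ μ.cells := by
        rw [YoungDiagram.mem_cells] at hmem2 ⊢
        exact μ.up_left_mem le_rfl hj.le hmem2
      simp only [hG, if_pos hmem1, if_pos hmem2]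
      exact (EGaux.unrk_lt_unrk hAcard (hSYTIcc U hU _ hmem1) (hSYTIcc U hU _ hmem2)).mpr
        (hU.1 i j1 j2 hj hmem2)
    · intro i1 i2 j hi hmem2
      have hmem1 : (i1, j) ∈ μ.cells := by
        rw [YoungDiagram.mem_cells] at hmem2 ⊢
        exact μ.up_left_mem hi.le le_rfl hmem2
      simp only [hG, if_pos hmem1, if_pos hmem2]
      exact (EGaux.unrk_lt_unrk hAcard (hSYTIcc U hU _ hmem1) (hSYTIcc U hU _ hmem2)).mpr
        (hU.2.1 i1 i2 j hi hmem2)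
    · intro i j hij
      simp only [hG, if_neg hij]
    · -- reading word is reduced
      have hrw : readingWord μ (G U) = (EGaux.cellList μ).map fun c => G U c.1 c.2 :=
        EGaux.readingWord_eq μ _
      have hval : ∀ c ∈ EGaux.cellList μ, G U c.1 c.2 = EGaux.unrk A (U c.1 c.2) := by
        intro c hc
        simp only [hG, if_pos (EGaux.mem_cellList.mp hc)]
      have hnodup : (readingWord μ (G U)).Nodup := by
        rw [hrw]
        apply (EGaux.cellList_nodup μ).map_on
        intro c hc c' hc' heq
        rw [hval c hc, hval c' hc'] at heq
        have hUc := hSYTIcc U hU c (EGaux.mem_cellList.mp hc)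
        have hUc' := hSYTIcc U hU c' (EGaux.mem_cellList.mp hc')
        have : U c.1 c.2 = U c'.1 c'.2 := by
          rw [← EGaux.rk_unrk hAcard hUc, ← EGaux.rk_unrk hAcard hUc', heq]
        exact hUinj (EGaux.mem_cellList.mp hc) (EGaux.mem_cellList.mp hc') this
      have htf : (readingWord μ (G U)).toFinset = l.toFinset := by
        rw [hrw, EGaux.toFinset_map', EGaux.cellList_toFinset]
        have h2 : μ.cells.image (fun c => G U c.1 c.2) =
            μ.cells.image (fun c => EGaux.unrk A (U c.1 c.2)) := by
          apply Finset.image_congr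
          intro c hc
          exact if_pos (show ((c.1, c.2) : ℕ × ℕ) ∈ μ.cells by simpa using hc)
        rw [h2, show (fun c : ℕ × ℕ => EGaux.unrk A (U c.1 c.2)) =
          (EGaux.unrk A) ∘ (fun c : ℕ × ℕ => U c.1 c.2) from rfl, ← Finset.image_image,
          hU.2.2.2, EGaux.unrk_image hAcard]
      exact EGaux.reduced_of_perm hl hg
        (List.perm_of_nodup_nodup_toFinset_eq hnodup hg.1 htf)
  -- inverses
  have hGF : ∀ T ∈ EGset μ w, G (F T) = T := by
    intro T hT
    funext i j
    by_cases hmem : (i, j) ∈ μ.cells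
    · simp only [hG, hF, if_pos hmem]
      exact EGaux.unrk_rk (hEGA T hT (i, j) hmem)
    · simp only [hG, if_neg hmem]
      exact (hT.2.2.1 i j hmem).symm
  have hFG : ∀ U ∈ SYTset μ, F (G U) = U := by
    intro U hU
    funext i j
    by_cases hmem : (i, j) ∈ μ.cells
    · simp only [hF, hG, if_pos hmem]
      exact EGaux.rk_unrk hAcard (hSYTIcc U hU (i, j) hmem)
    · simp only [hF, if_neg hmem]
      exact (hU.2.2.1 i j hmem).symm
  have himgFG : F '' EGset μ w = SYTset μ := by
    apply Set.Subset.antisymm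
    · rintro _ ⟨T, hT, rfl⟩
      exact hmapsF T hT
    · intro U hU
      exact ⟨G U, hmapsG U hU, hFG U hU⟩
  have hinj : Set.InjOn F (EGset μ w) := fun T hT T' hT' hFT => by
    rw [← hGF T hT, ← hGF T' hT', hFT]
  rw [← himgFG, Set.ncard_image_of_injOn hinj]
end
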